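/- arXiv:1710.05250 — 7 statements merged into one kernel-verified Lean document; each statement's English description precedes it below -/
import Mathlib

section
/- For every finite star-free graph Γ there exists a finite semigroup S such that the commuting graph of S is isomorphic to Γ. -/
/-- The commuting graph of a semigroup: vertices are the non-central
elements, two distinct vertices are adjacent iff they commute. -/
def CommutingGraph (S : Type*) [Semigroup S] :
    SimpleGraph {x : S // x ∉ Set.center S} where
  Adj a b := a ≠ b ∧ (a : S) * b = (b : S) * a
  symm := ⟨fun _ _ ⟨h, hc⟩ => ⟨h.symm, hc.symm⟩⟩
  loopless := ⟨fun _ ⟨h, _⟩ => h rfl⟩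

/-- A graph is star-free if no vertex is adjacent to every other vertex. -/
def SimpleGraph.IsStarFree {V : Type*} (G : SimpleGraph V) : Prop :=
  ∀ v : V, ¬ (∀ w : V, w ≠ v → G.Adj v w)

namespace StarFreeAux

variable {V : Type} (G : SimpleGraph V)

open Classical in
noncomputable def myMul : Option (V ⊕ V × V) → Option (V ⊕ V × V) → Option (V ⊕ V × V)
  | some (Sum.inl x), some (Sum.inl y) =>
      if x ≠ y ∧ ¬ G.Adj x y then some (Sum.inr (x, y)) else none
  | _, _ => none

lemma myMul_ne_inl (a b : Option (V ⊕ V × V)) (v : V) :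
    myMul G a b ≠ some (Sum.inl v) := by
  rcases a with _ | (x | p) <;> rcases b with _ | (y | q) <;> simp only [myMul] <;>
    first
      | simp
      | (split <;> simp)

lemma myMul_left_junk (a c : Option (V ⊕ V × V))
    (h : a = none ∨ ∃ p : V × V, a = some (Sum.inr p)) : myMul G a c = none := by
  rcases h with rfl | ⟨p, rfl⟩ <;> rcases c with _ | (y | q) <;> rfl

lemma myMul_right_junk (a c : Option (V ⊕ V × V))
    (h : c = none ∨ ∃ p : V × V, c = some (Sum.inr p)) : myMul G a c = none := by
  rcases h with rfl | ⟨p, rfl⟩ <;> rcases a with _ | (y | q) <;> rfl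

lemma myMul_shape (a b : Option (V ⊕ V × V)) :
    myMul G a b = none ∨ ∃ p : V × V, myMul G a b = some (Sum.inr p) := by
  rcases h : myMul G a b with _ | (x | p)
  · exact Or.inl rfl
  · exact absurd h (myMul_ne_inl G a b x)
  · exact Or.inr ⟨p, rfl⟩

noncomputable def sgp : Semigroup (Option (V ⊕ V × V)) where
  mul := myMul G
  mul_assoc a b c := by
    show myMul G (myMul G a b) c = myMul G a (myMul G b c)
    rw [myMul_left_junk G _ c (myMul_shape G a b),
        myMul_right_junk G a _ (myMul_shape G b c)]

lemma mem_center_iff (a : Option (V ⊕ V × V)) :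
    a ∈ @Set.center _ (@Semigroup.toMul _ (sgp G)) ↔
      ∀ b, myMul G b a = myMul G a b :=
  @Semigroup.mem_center_iff _ (sgp G) a

lemma junk_central (a : Option (V ⊕ V × V))
    (h : a = none ∨ ∃ p : V × V, a = some (Sum.inr p)) :
    a ∈ @Set.center _ (@Semigroup.toMul _ (sgp G)) := by
  rw [mem_center_iff]
  intro b
  rw [myMul_left_junk G a b h, myMul_right_junk G b a h]

open Classical in
lemma inl_mul_inl (x y : V) :
    myMul G (some (Sum.inl x)) (some (Sum.inl y)) =
      if x ≠ y ∧ ¬ G.Adj x y then some (Sum.inr (x, y)) else none := rfl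

lemma inl_not_central (hG : G.IsStarFree) (v : V) :
    some (Sum.inl v) ∉ @Set.center _ (@Semigroup.toMul _ (sgp G)) := by
  rw [mem_center_iff]
  intro h
  obtain ⟨w, hw⟩ := not_forall.mp (hG v)
  rw [Classical.not_imp] at hw
  obtain ⟨hne, hnadj⟩ := hw
  have := h (some (Sum.inl w))
  rw [inl_mul_inl, inl_mul_inl] at this
  rw [if_pos ⟨hne, fun h => hnadj (G.adj_symm h)⟩,
      if_pos ⟨Ne.symm hne, hnadj⟩] at this
  simp at this
  exact hne this.1

lemma central_cases (a : Option (V ⊕ V × V))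
    (h : a ∉ @Set.center _ (@Semigroup.toMul _ (sgp G))) :
    ∃ v : V, a = some (Sum.inl v) := by
  rcases a with _ | (x | p)
  · exact absurd (junk_central G _ (Or.inl rfl)) h
  · exact ⟨x, rfl⟩
  · exact absurd (junk_central G _ (Or.inr ⟨p, rfl⟩)) h

noncomputable def theEquiv (hG : G.IsStarFree) :
    {x : Option (V ⊕ V × V) // x ∉ @Set.center _ (@Semigroup.toMul _ (sgp G))} ≃ V where
  toFun x := match x with
    | ⟨some (Sum.inl v), _⟩ => v
    | ⟨none, h⟩ => absurd (junk_central G _ (Or.inl rfl)) h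
    | ⟨some (Sum.inr p), h⟩ => absurd (junk_central G _ (Or.inr ⟨p, rfl⟩)) h
  invFun v := ⟨some (Sum.inl v), inl_not_central G hG v⟩
  left_inv x := match x with
    | ⟨some (Sum.inl v), _⟩ => rfl
    | ⟨none, h⟩ => absurd (junk_central G _ (Or.inl rfl)) h
    | ⟨some (Sum.inr p), h⟩ => absurd (junk_central G _ (Or.inr ⟨p, rfl⟩)) h
  right_inv v := rfl

end StarFreeAux

theorem starFree_is_commuting_graph {V : Type} [Fintype V] (G : SimpleGraph V)
    (hG : G.IsStarFree) :
    ∃ (S : Type) (inst : Semigroup S) (_ : Fintype S),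
      Nonempty (@CommutingGraph S inst ≃g G) := by
  classical
  refine ⟨Option (V ⊕ V × V), StarFreeAux.sgp G, inferInstance, ⟨?_⟩⟩
  letI inst := StarFreeAux.sgp G
  refine ⟨StarFreeAux.theEquiv G hG, ?_⟩
  rintro ⟨_ | (x | p), ha⟩ ⟨_ | (y | q), hb⟩ <;>
    first
      | exact absurd (StarFreeAux.junk_central G _ (Or.inl rfl)) ‹_›
      | exact absurd (StarFreeAux.junk_central G _ (Or.inr ⟨_, rfl⟩)) ‹_›
      | skip
  show G.Adj x y ↔ _ ≠ _ ∧ StarFreeAux.myMul G (some (Sum.inl x)) (some (Sum.inl y)) =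
      StarFreeAux.myMul G (some (Sum.inl y)) (some (Sum.inl x))
  rw [StarFreeAux.inl_mul_inl, StarFreeAux.inl_mul_inl]
  constructor
  · intro h
    refine ⟨by simp [Subtype.ext_iff, G.ne_of_adj h], ?_⟩
    rw [if_neg (fun hc => hc.2 h), if_neg (fun hc => hc.2 (G.adj_symm h))]
  · rintro ⟨hne, heq⟩
    have hxy : x ≠ y := fun h => hne (by simp [Subtype.ext_iff, h])
    by_contra hadj
    rw [if_pos ⟨hxy, hadj⟩, if_pos ⟨hxy.symm, fun h => hadj (G.adj_symm h)⟩] at heq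
    simp at heq
    exact hxy heq.1
end

section
/- In the semigroup S constructed from a star-free graph Γ = (V,E) by the relations v₁v₂v₃ = 0 for all vᵢ and uv = vu for (u,v) ∈ E, the center Z(S) consists of 0 together with all products vu of two generators. -/
/-- The free semigroup with zero on `V`. -/
abbrev FreeSemigroupWithZero (V : Type*) := WithZero (FreeSemigroup V)

/-- The defining relations of the semigroup associated to a graph:
all products of three generators are `0`, and `uv = vu` for every edge. -/
def graphRel (V : Type*) (G : SimpleGraph V) :
    FreeSemigroupWithZero V → FreeSemigroupWithZero V → Prop := fun p q =>
  (∃ v₁ v₂ v₃ : V,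
      p = ((FreeSemigroup.of v₁ * FreeSemigroup.of v₂ * FreeSemigroup.of v₃ :
        FreeSemigroup V) : FreeSemigroupWithZero V) ∧ q = 0) ∨
  (∃ u v : V, G.Adj u v ∧
      p = ((FreeSemigroup.of u * FreeSemigroup.of v : FreeSemigroup V) :
        FreeSemigroupWithZero V) ∧
      q = ((FreeSemigroup.of v * FreeSemigroup.of u : FreeSemigroup V) :
        FreeSemigroupWithZero V))

/-- The congruence generated by the defining relations. -/
def graphCon (V : Type*) (G : SimpleGraph V) : Con (FreeSemigroupWithZero V) :=
  conGen (graphRel V G)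

/-- The semigroup presented by `⟨v ∈ V | v₁v₂v₃ = 0, uv = vu ∀(u,v) ∈ E⟩`. -/
def GraphSemigroup (V : Type*) (G : SimpleGraph V) : Type _ :=
  (graphCon V G).Quotient

instance (V : Type*) (G : SimpleGraph V) : Semigroup (GraphSemigroup V G) :=
  Con.semigroup _

/-- The canonical map onto the presented semigroup. -/
def gmk (V : Type*) (G : SimpleGraph V) :
    FreeSemigroupWithZero V → GraphSemigroup V G :=
  (graphCon V G).toQuotient

/-! ### Auxiliary development -/

section Aux

variable {V : Type} (G : SimpleGraph V)

/-- Relation on pairs: equal, or swapped with adjacent (or equal) entries. -/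
def pairRel : V × V → V × V → Prop := fun p q =>
  p = q ∨ (p.1 = q.2 ∧ p.2 = q.1 ∧ (G.Adj p.1 p.2 ∨ p.1 = p.2))

theorem pairRel_equiv : Equivalence (pairRel G) := by
  constructor
  · intro p; exact Or.inl rfl
  · rintro ⟨a, b⟩ ⟨c, d⟩ (h | ⟨h1, h2, h3⟩)
    · exact Or.inl h.symm
    · simp_all only
      right
      refine ⟨rfl, rfl, ?_⟩
      rcases h3 with h | h
      · exact Or.inl h.symm
      · exact Or.inr h.symm
  · rintro ⟨a, b⟩ ⟨c, d⟩ ⟨e, f⟩ (h | ⟨h1, h2, h3⟩) (h' | ⟨h1', h2', h3'⟩)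
    · exact Or.inl (h.trans h')
    · rw [h]; exact Or.inr ⟨h1', h2', h3'⟩
    · rw [← h']; exact Or.inr ⟨h1, h2, h3⟩
    · simp_all only
      exact Or.inl rfl

/-- Setoid of pairs. -/
def pairSetoid : Setoid (V × V) := ⟨pairRel G, pairRel_equiv G⟩

/-- The normal-form target. -/
abbrev NormTarget := Option (V ⊕ Quotient (pairSetoid G))

/-- Normal form of a free semigroup element. -/
def nfree (w : FreeSemigroup V) : NormTarget G :=
  match w.tail with
  | [] => some (Sum.inl w.head)
  | [b] => some (Sum.inr (Quotient.mk (pairSetoid G) (w.head, b)))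
  | _ => none

/-- Normal form on the free semigroup with zero. -/
def Nfun : FreeSemigroupWithZero V → NormTarget G :=
  WithZero.recZeroCoe none (nfree G)

/-- Multiplication on the target. -/
def nmul : NormTarget G → NormTarget G → NormTarget G := fun x y =>
  match x, y with
  | some (Sum.inl a), some (Sum.inl b) =>
      some (Sum.inr (Quotient.mk (pairSetoid G) (a, b)))
  | _, _ => none

theorem Nfun_mul (p q : FreeSemigroupWithZero V) :
    Nfun G (p * q) = nmul G (Nfun G p) (Nfun G q) := by
  induction p using WithZero.recZeroCoe with
  | zero => simp [Nfun, nmul, zero_mul]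
  | coe w =>
    induction q using WithZero.recZeroCoe with
    | zero => simp [Nfun, nmul, mul_zero]
    | coe w' =>
      rw [← WithZero.coe_mul]
      obtain ⟨a, ta⟩ := w
      obtain ⟨b, tb⟩ := w'
      rcases ta with _ | ⟨x, _ | ⟨y, ta⟩⟩ <;>
        rcases tb with _ | ⟨x', _ | ⟨y', tb⟩⟩ <;>
          simp [Nfun, nmul, nfree, FreeSemigroup.mk_mul_mk]

/-- The congruence given by equality of normal forms. -/
def normCon : Con (FreeSemigroupWithZero V) where
  r p q := Nfun G p = Nfun G q
  iseqv := ⟨fun _ => rfl, Eq.symm, Eq.trans⟩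
  mul' := by
    intro a b c d h1 h2
    show Nfun G (a * c) = Nfun G (b * d)
    rw [Nfun_mul, Nfun_mul]
    exact congrArg₂ (nmul G) h1 h2

theorem graphCon_le_normCon : graphCon V G ≤ normCon G := by
  rw [graphCon]
  refine (Con.conGen_le.2 ?_)
  rintro p q (⟨v₁, v₂, v₃, rfl, rfl⟩ | ⟨u, v, hadj, rfl, rfl⟩)
  · show Nfun G _ = Nfun G _
    simp [Nfun, nfree, FreeSemigroup.of, FreeSemigroup.mk_mul_mk]
  · show Nfun G _ = Nfun G _
    simp only [Nfun, nfree, FreeSemigroup.of, FreeSemigroup.mk_mul_mk,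
      List.nil_append, WithZero.recZeroCoe_coe]
    congr 1
    congr 1
    exact Quotient.sound (Or.inr ⟨rfl, rfl, Or.inl hadj⟩)

/-- Key separation: if `vu = uv` in the presented semigroup then `v = u` or adjacency. -/
theorem sep {u v : V}
    (h : gmk V G ((FreeSemigroup.of v * FreeSemigroup.of u : FreeSemigroup V) :
        FreeSemigroupWithZero V) =
      gmk V G ((FreeSemigroup.of u * FreeSemigroup.of v : FreeSemigroup V) :
        FreeSemigroupWithZero V)) : v = u ∨ G.Adj v u := by
  have hc : graphCon V G _ _ := (Con.eq _).1 h
  have hn := graphCon_le_normCon G hc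
  have hn' : Nfun G _ = Nfun G _ := hn
  simp only [Nfun, nfree, FreeSemigroup.of, FreeSemigroup.mk_mul_mk,
    List.nil_append, WithZero.recZeroCoe_coe] at hn'
  have hq : Quotient.mk (pairSetoid G) (v, u) = Quotient.mk (pairSetoid G) (u, v) := by
    simpa using hn'
  have := Quotient.exact hq
  rcases this with h' | ⟨h1, h2, h3⟩
  · simp only [Prod.mk.injEq] at h'
    exact Or.inl h'.1
  · rcases h3 with h3 | h3
    · exact Or.inr h3
    · exact Or.inl h3

/-- Words of length at least 3 are zero. -/
theorem long_eq_zero (a b c : V) (l : List V) :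
    gmk V G ((FreeSemigroup.mk a (b :: c :: l) : FreeSemigroup V) :
      FreeSemigroupWithZero V) = gmk V G 0 := by
  have hbase : graphCon V G
      ((FreeSemigroup.of a * FreeSemigroup.of b * FreeSemigroup.of c :
        FreeSemigroup V) : FreeSemigroupWithZero V) 0 :=
    ConGen.Rel.of _ _ (Or.inl ⟨a, b, c, rfl, rfl⟩)
  apply (Con.eq _).2
  rcases l with _ | ⟨d, l⟩
  · exact hbase
  · have hmul := (graphCon V G).mul hbase
      ((graphCon V G).refl ((FreeSemigroup.mk d l : FreeSemigroup V) :
        FreeSemigroupWithZero V))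
    rw [zero_mul, ← WithZero.coe_mul] at hmul
    convert hmul using 2
    rfl

theorem sq_eq (a b : V) :
    (FreeSemigroup.mk a [b] : FreeSemigroup V) =
      FreeSemigroup.of a * FreeSemigroup.of b := rfl

end Aux

theorem center_graphSemigroup {V : Type} [Fintype V] (G : SimpleGraph V)
    (hG : G.IsStarFree) :
    Set.center (GraphSemigroup V G) =
      insert (gmk V G 0)
        {x | ∃ u v : V,
          x = gmk V G ((FreeSemigroup.of u * FreeSemigroup.of v :
            FreeSemigroup V) : FreeSemigroupWithZero V)} := by
  ext x
  constructor
  · intro hx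
    have hx' := Semigroup.mem_center_iff.1 hx
    obtain ⟨p, rfl⟩ : ∃ p, gmk V G p = x := Quotient.exists_rep x
    induction p using WithZero.recZeroCoe with
    | zero => exact Set.mem_insert _ _
    | coe w =>
      obtain ⟨a, ta⟩ := w
      rcases ta with _ | ⟨b, _ | ⟨c, ta⟩⟩
      · -- single generator: contradiction with star-free
        exfalso
        apply hG a
        intro w hw
        have h := hx' (gmk V G ((FreeSemigroup.of w : FreeSemigroup V) :
          FreeSemigroupWithZero V))
        have h' : gmk V G ((FreeSemigroup.of w * FreeSemigroup.of a :
              FreeSemigroup V) : FreeSemigroupWithZero V) =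
            gmk V G ((FreeSemigroup.of a * FreeSemigroup.of w :
              FreeSemigroup V) : FreeSemigroupWithZero V) := by
          rw [WithZero.coe_mul, WithZero.coe_mul]
          exact h
        rcases sep G h' with h'' | h''
        · exact absurd h'' hw
        · exact h''.symm
      · -- length two
        right
        exact ⟨a, b, by rw [sq_eq]⟩
      · -- length ≥ 3
        left
        rw [long_eq_zero]
  · rintro (rfl | ⟨u, v, rfl⟩)
    · apply Semigroup.mem_center_iff.2
      intro g
      obtain ⟨q, rfl⟩ : ∃ q, gmk V G q = g := Quotient.exists_rep g
      show gmk V G (q * 0) = gmk V G (0 * q)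
      rw [mul_zero, zero_mul]
    · apply Semigroup.mem_center_iff.2
      intro g
      obtain ⟨q, rfl⟩ : ∃ q, gmk V G q = g := Quotient.exists_rep g
      show gmk V G (q * _) = gmk V G (_ * q)
      induction q using WithZero.recZeroCoe with
      | zero => rw [mul_zero, zero_mul]
      | coe w =>
        rw [← WithZero.coe_mul, ← WithZero.coe_mul]
        obtain ⟨a, ta⟩ := w
        have key : ∀ (h : V) (t : List V), 2 ≤ t.length →
            gmk V G ((FreeSemigroup.mk h t : FreeSemigroup V) :
              FreeSemigroupWithZero V) = gmk V G 0 := by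
          rintro h (_ | ⟨b, _ | ⟨c, t⟩⟩) hlen
          · simp at hlen
          · simp at hlen
          · exact long_eq_zero G h b c t
        rw [show (FreeSemigroup.mk a ta * (FreeSemigroup.of u * FreeSemigroup.of v) :
              FreeSemigroup V) = FreeSemigroup.mk a (ta ++ [u, v]) from rfl,
          show ((FreeSemigroup.of u * FreeSemigroup.of v) * FreeSemigroup.mk a ta :
              FreeSemigroup V) = FreeSemigroup.mk u (v :: a :: ta) from rfl]
        rw [key a _ (by simp), key u _ (by simp)]
end

section
/- For every natural number n ≥ 1, the semigroup Sₙ = ⟨a, b | a^{n+1} = b² = 0, aba = 0, b a^i b = 0 for all i ≥ 1⟩ has exactly 3n + 2 elements, namely 0, b, a, a², ..., aⁿ, ab, a²b, ..., aⁿb, ba, ba², ..., baⁿ. -/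
/-- The free semigroup with zero on the two generators `a = of false`, `b = of true`. -/
abbrev W2 := WithZero (FreeSemigroup Bool)

/-- The generator `a`. -/
def ga : FreeSemigroup Bool := FreeSemigroup.of false

/-- The generator `b`. -/
def gb : FreeSemigroup Bool := FreeSemigroup.of true

/-- `fsPow x k = x^(k+1)` (positive powers in a semigroup). -/
def fsPow (x : FreeSemigroup Bool) : ℕ → FreeSemigroup Bool
  | 0 => x
  | k + 1 => fsPow x k * x

/-- `apow i` is `a^i` for `i ≥ 1` (junk value `a` at `i = 0`). -/
def apow (i : ℕ) : FreeSemigroup Bool := fsPow ga (i - 1)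

/-- The defining relations of `Sₙ`: `a^(n+1) = b² = 0`, `aba = 0`, `b aⁱ b = 0` for `i ≥ 1`. -/
def SnRel (n : ℕ) : W2 → W2 → Prop := fun p q =>
  (p = ((apow (n + 1) : FreeSemigroup Bool) : W2) ∧ q = 0) ∨
  (p = ((gb * gb : FreeSemigroup Bool) : W2) ∧ q = 0) ∨
  (p = ((ga * gb * ga : FreeSemigroup Bool) : W2) ∧ q = 0) ∨
  (∃ i : ℕ, 1 ≤ i ∧ p = ((gb * apow i * gb : FreeSemigroup Bool) : W2) ∧ q = 0)

/-- The congruence generated by the relations of `Sₙ`. -/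
def SnCon (n : ℕ) : Con W2 := conGen (SnRel n)

/-- The semigroup `Sₙ = ⟨a, b | a^(n+1) = b² = 0, aba = baⁱb = 0 ∀ i ≥ 1⟩`. -/
def Sn (n : ℕ) : Type := (SnCon n).Quotient

instance (n : ℕ) : Semigroup (Sn n) := Con.semigroup _

/-- The canonical projection onto `Sₙ`. -/
def smk (n : ℕ) : W2 → Sn n := (SnCon n).toQuotient

namespace SnProof

/-! ### A separating model -/

inductive T : Type
  | Z | B | A (i : ℕ) | AB (i : ℕ) | BA (i : ℕ)
  deriving DecidableEq

def cA (n k : ℕ) : T := if k ≤ n then .A k else .Z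
def cAB (n k : ℕ) : T := if k ≤ n then .AB k else .Z
def cBA (n k : ℕ) : T := if k ≤ n then .BA k else .Z

def m (n : ℕ) : T → T → T
  | .Z, _ => .Z
  | .B, .Z => .Z
  | .B, .B => .Z
  | .B, .A j => cBA n j
  | .B, .AB _ => .Z
  | .B, .BA _ => .Z
  | .A _, .Z => .Z
  | .A i, .B => cAB n i
  | .A i, .A j => cA n (i + j)
  | .A i, .AB j => cAB n (i + j)
  | .A _, .BA _ => .Z
  | .AB _, _ => .Z
  | .BA _, .Z => .Z
  | .BA _, .B => .Z
  | .BA i, .A j => cBA n (i + j)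
  | .BA _, .AB _ => .Z
  | .BA _, .BA _ => .Z

def gen : Bool → T
  | false => .A 1
  | true => .B

theorem assoc_gen (n : ℕ) (x y : T) (c : Bool) :
    m n (m n x y) (gen c) = m n x (m n y (gen c)) := by
  rcases x <;> rcases y <;> rcases c <;>
    simp only [m, gen, cA, cAB, cBA] <;>
    split_ifs <;> simp only [m, cA, cAB, cBA] <;> split_ifs <;> first | rfl | omega

@[simp] theorem m_Z_left (n : ℕ) (x : T) : m n .Z x = .Z := rfl
@[simp] theorem m_Z_right (n : ℕ) (x : T) : m n x .Z = .Z := by rcases x <;> rfl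

def ψ (n : ℕ) (w : FreeSemigroup Bool) : T :=
  w.tail.foldl (fun t c => m n t (gen c)) (gen w.head)

theorem foldl_m (n : ℕ) (l : List Bool) (t s : T) :
    l.foldl (fun t c => m n t (gen c)) (m n t s)
      = m n t (l.foldl (fun t c => m n t (gen c)) s) := by
  induction l generalizing s with
  | nil => rfl
  | cons c l ih => simp only [List.foldl_cons, assoc_gen, ih]

theorem ψ_mul (n : ℕ) (x y : FreeSemigroup Bool) : ψ n (x * y) = m n (ψ n x) (ψ n y) := by
  have hxy : (x * y).head = x.head := rfl
  have hty : (x * y).tail = x.tail ++ y.head :: y.tail := rfl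
  simp only [ψ, hxy, hty, List.foldl_append, List.foldl_cons]
  rw [foldl_m]

def φ (n : ℕ) : W2 → T := WithZero.recZeroCoe .Z (ψ n)

@[simp] theorem φ_zero (n : ℕ) : φ n 0 = .Z := rfl
@[simp] theorem φ_coe (n : ℕ) (w : FreeSemigroup Bool) : φ n (w : W2) = ψ n w := rfl

theorem φ_mul (n : ℕ) (x y : W2) : φ n (x * y) = m n (φ n x) (φ n y) := by
  induction x using WithZero.recZeroCoe with
  | zero => simp [zero_mul]
  | coe u =>
    induction y using WithZero.recZeroCoe with
    | zero => simp [mul_zero]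
    | coe v => simp only [← WithZero.coe_mul, φ_coe, ψ_mul]

theorem ψ_ga (n : ℕ) : ψ n ga = .A 1 := rfl
theorem ψ_gb (n : ℕ) : ψ n gb = .B := rfl

theorem ψ_fsPow (n : ℕ) (hn : 1 ≤ n) (k : ℕ) : ψ n (fsPow ga k) = cA n (k + 1) := by
  induction k with
  | zero => simp [fsPow, ψ_ga, cA, hn]
  | succ k ih =>
    rw [show fsPow ga (k + 1) = fsPow ga k * ga from rfl, ψ_mul, ih, ψ_ga]
    unfold cA
    split_ifs with h1 h2 <;> simp only [m, cA, m_Z_left] <;> (try split_ifs) <;>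
      first | rfl | omega | (exfalso; omega)

theorem ψ_apow (n : ℕ) (hn : 1 ≤ n) (i : ℕ) (hi : 1 ≤ i) : ψ n (apow i) = cA n i := by
  rw [apow, ψ_fsPow n hn, Nat.sub_add_cancel hi]

theorem φ_rel (n : ℕ) (hn : 1 ≤ n) (p q : W2) (h : SnRel n p q) : φ n p = φ n q := by
  rcases h with ⟨hp, hq⟩ | ⟨hp, hq⟩ | ⟨hp, hq⟩ | ⟨i, hi, hp, hq⟩ <;> subst hp <;> subst hq
  · rw [φ_coe, ψ_apow n hn _ (by omega), φ_zero, cA]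
    rw [if_neg (by omega)]
  · rw [φ_coe, ψ_mul, ψ_gb, φ_zero]; rfl
  · rw [φ_coe, ψ_mul, ψ_mul, ψ_ga, ψ_gb, φ_zero]
    show m n (m n (.A 1) .B) (.A 1) = _
    simp only [m, cAB]
    split_ifs <;> rfl
  · rw [φ_coe, ψ_mul, ψ_mul, ψ_gb, ψ_apow n hn i hi, φ_zero]
    show m n (m n .B (cA n i)) .B = _
    unfold cA
    split_ifs <;> simp only [m, cBA] <;> split_ifs <;> rfl

theorem φ_con (n : ℕ) (hn : 1 ≤ n) (p q : W2) (h : SnCon n p q) : φ n p = φ n q := by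
  replace h : ConGen.Rel (SnRel n) p q := h
  induction h with
  | of p q h => exact φ_rel n hn p q h
  | refl => rfl
  | symm _ ih => exact ih.symm
  | trans _ _ ih1 ih2 => exact ih1.trans ih2
  | mul _ _ ih1 ih2 => rw [φ_mul, φ_mul, ih1, ih2]

def Φ (n : ℕ) (hn : 1 ≤ n) : Sn n → T :=
  Quotient.lift (φ n) (fun p q h => φ_con n hn p q h)

theorem Φ_smk (n : ℕ) (hn : 1 ≤ n) (w : W2) : Φ n hn (smk n w) = φ n w := rfl

/-! ### Computations in `Sn` -/

theorem smk_mul (n : ℕ) (x y : W2) : smk n (x * y) = smk n x * smk n y := rfl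

theorem smk_coe_mul (n : ℕ) (u v : FreeSemigroup Bool) :
    smk n ((u * v : FreeSemigroup Bool) : W2) = smk n (u : W2) * smk n (v : W2) := by
  rw [← smk_mul, WithZero.coe_mul]

theorem zero_mul' (n : ℕ) (x : Sn n) : smk n 0 * x = smk n 0 := by
  induction x using Quotient.ind with
  | _ p => rw [show (⟦p⟧ : Sn n) = smk n p from rfl, ← smk_mul, zero_mul]

theorem mul_zero' (n : ℕ) (x : Sn n) : x * smk n 0 = smk n 0 := by
  induction x using Quotient.ind with
  | _ p => rw [show (⟦p⟧ : Sn n) = smk n p from rfl, ← smk_mul, mul_zero]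

theorem smk_of_rel (n : ℕ) {p q : W2} (h : SnRel n p q) : smk n p = smk n q :=
  Quotient.sound (ConGen.Rel.of p q h)

theorem fsPow_add (x : FreeSemigroup Bool) (i j : ℕ) :
    fsPow x i * fsPow x j = fsPow x (i + j + 1) := by
  induction j with
  | zero => rfl
  | succ j ih =>
    rw [show fsPow x (j + 1) = fsPow x j * x from rfl, ← mul_assoc, ih]
    rfl

theorem apow_add (i j : ℕ) (hi : 1 ≤ i) (hj : 1 ≤ j) :
    apow i * apow j = apow (i + j) := by
  unfold apow
  rw [fsPow_add]
  congr 1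
  omega

-- abbreviations
theorem sa_mul (n : ℕ) (i j : ℕ) (hi : 1 ≤ i) (hj : 1 ≤ j) :
    smk n ((apow i : FreeSemigroup Bool) : W2) * smk n ((apow j : FreeSemigroup Bool) : W2)
      = smk n ((apow (i + j) : FreeSemigroup Bool) : W2) := by
  rw [← smk_coe_mul, apow_add i j hi hj]

theorem sa_zero (n : ℕ) (k : ℕ) (hk : n + 1 ≤ k) :
    smk n ((apow k : FreeSemigroup Bool) : W2) = smk n 0 := by
  rcases eq_or_lt_of_le hk with h | h
  · exact h ▸ smk_of_rel n (Or.inl ⟨rfl, rfl⟩)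
  · have : apow (n + 1) * apow (k - (n + 1)) = apow k := by
      rw [apow_add _ _ (by omega) (by omega)]; congr 1; omega
    rw [← this, smk_coe_mul, smk_of_rel n (Or.inl ⟨rfl, rfl⟩), zero_mul']

theorem sbb (n : ℕ) : smk n ((gb : FreeSemigroup Bool) : W2) * smk n ((gb : FreeSemigroup Bool) : W2) = smk n 0 := by
  rw [← smk_coe_mul]
  exact smk_of_rel n (Or.inr (Or.inl ⟨rfl, rfl⟩))

theorem sbab (n : ℕ) (i : ℕ) (hi : 1 ≤ i) :
    smk n ((gb : FreeSemigroup Bool) : W2) * smk n ((apow i : FreeSemigroup Bool) : W2)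
      * smk n ((gb : FreeSemigroup Bool) : W2) = smk n 0 := by
  rw [← smk_coe_mul, ← smk_coe_mul]
  exact smk_of_rel n (Or.inr (Or.inr (Or.inr ⟨i, hi, rfl, rfl⟩)))

theorem saba (n : ℕ) (i j : ℕ) (hi : 1 ≤ i) (hj : 1 ≤ j) :
    smk n ((apow i : FreeSemigroup Bool) : W2) * smk n ((gb : FreeSemigroup Bool) : W2)
      * smk n ((apow j : FreeSemigroup Bool) : W2) = smk n 0 := by
  have h1 : ∀ j, 1 ≤ j → smk n ((apow 1 : FreeSemigroup Bool) : W2)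
      * smk n ((gb : FreeSemigroup Bool) : W2)
      * smk n ((apow j : FreeSemigroup Bool) : W2) = smk n 0 := by
    intro j hj
    have base : smk n ((apow 1 : FreeSemigroup Bool) : W2)
        * smk n ((gb : FreeSemigroup Bool) : W2)
        * smk n ((apow 1 : FreeSemigroup Bool) : W2) = smk n 0 := by
      rw [show apow 1 = ga from rfl, ← smk_coe_mul, ← smk_coe_mul]
      exact smk_of_rel n (Or.inr (Or.inr (Or.inl ⟨rfl, rfl⟩)))
    rcases eq_or_lt_of_le hj with h | h
    · exact h ▸ base
    · have : apow 1 * apow (j - 1) = apow j := by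
        rw [apow_add _ _ le_rfl (by omega)]; congr 1; omega
      calc smk n ((apow 1 : FreeSemigroup Bool) : W2) * smk n ((gb : FreeSemigroup Bool) : W2)
            * smk n ((apow j : FreeSemigroup Bool) : W2)
          = smk n ((apow 1 : FreeSemigroup Bool) : W2) * smk n ((gb : FreeSemigroup Bool) : W2)
            * (smk n ((apow 1 : FreeSemigroup Bool) : W2) * smk n ((apow (j-1) : FreeSemigroup Bool) : W2)) := by
            rw [← this, smk_coe_mul]
        _ = (smk n ((apow 1 : FreeSemigroup Bool) : W2) * smk n ((gb : FreeSemigroup Bool) : W2)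
            * smk n ((apow 1 : FreeSemigroup Bool) : W2)) * smk n ((apow (j-1) : FreeSemigroup Bool) : W2) := by
            rw [mul_assoc, mul_assoc, mul_assoc]
        _ = smk n 0 := by rw [base, zero_mul']
  rcases eq_or_lt_of_le hi with h | h
  · exact h ▸ h1 j hj
  · have : apow (i - 1) * apow 1 = apow i := by
      rw [apow_add _ _ (by omega) le_rfl]; congr 1; omega
    calc smk n ((apow i : FreeSemigroup Bool) : W2) * smk n ((gb : FreeSemigroup Bool) : W2)
          * smk n ((apow j : FreeSemigroup Bool) : W2)
        = smk n ((apow (i-1) : FreeSemigroup Bool) : W2)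
          * (smk n ((apow 1 : FreeSemigroup Bool) : W2) * smk n ((gb : FreeSemigroup Bool) : W2)
            * smk n ((apow j : FreeSemigroup Bool) : W2)) := by
          rw [← this, smk_coe_mul]
          rw [mul_assoc, mul_assoc, mul_assoc]
      _ = smk n 0 := by rw [h1 j hj, mul_zero']


/-! ### Normal forms -/

def sZ (n : ℕ) : Sn n := smk n 0
def sB (n : ℕ) : Sn n := smk n ((gb : FreeSemigroup Bool) : W2)
def sA (n i : ℕ) : Sn n := smk n ((apow i : FreeSemigroup Bool) : W2)

theorem sAB_eq (n i : ℕ) :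
    smk n ((apow i * gb : FreeSemigroup Bool) : W2) = sA n i * sB n := smk_coe_mul n _ _

theorem sBA_eq (n i : ℕ) :
    smk n ((gb * apow i : FreeSemigroup Bool) : W2) = sB n * sA n i := smk_coe_mul n _ _

def inS (n : ℕ) (x : Sn n) : Prop :=
  x = sZ n ∨ x = sB n ∨ (∃ i, 1 ≤ i ∧ i ≤ n ∧ x = sA n i) ∨
    (∃ i, 1 ≤ i ∧ i ≤ n ∧ x = sA n i * sB n) ∨ (∃ i, 1 ≤ i ∧ i ≤ n ∧ x = sB n * sA n i)

theorem zl (n : ℕ) (x : Sn n) : sZ n * x = sZ n := zero_mul' n x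
theorem zr (n : ℕ) (x : Sn n) : x * sZ n = sZ n := mul_zero' n x

theorem hbb (n : ℕ) : sB n * sB n = sZ n := sbb n
theorem hAA (n : ℕ) {i j : ℕ} (hi : 1 ≤ i) (hj : 1 ≤ j) : sA n i * sA n j = sA n (i + j) :=
  sa_mul n i j hi hj
theorem hA0 (n : ℕ) {k : ℕ} (hk : n + 1 ≤ k) : sA n k = sZ n := sa_zero n k hk
theorem hABA (n : ℕ) {i j : ℕ} (hi : 1 ≤ i) (hj : 1 ≤ j) :
    sA n i * sB n * sA n j = sZ n := saba n i j hi hj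
theorem hBAB (n : ℕ) {i : ℕ} (hi : 1 ≤ i) : sB n * sA n i * sB n = sZ n := sbab n i hi

theorem inS_mul (n : ℕ) (hn : 1 ≤ n) {x y : Sn n} (hx : inS n x) (hy : inS n y) :
    inS n (x * y) := by
  have hAj : ∀ i j : ℕ, 1 ≤ i → 1 ≤ j → inS n (sA n i * sA n j) := by
    intro i j hi hj
    rw [hAA n hi hj]
    rcases le_or_gt (i + j) n with h | h
    · exact Or.inr (Or.inr (Or.inl ⟨i + j, by omega, h, rfl⟩))
    · exact Or.inl (hA0 n (by omega))
  rcases hx with rfl | rfl | ⟨i, hi1, hi2, rfl⟩ | ⟨i, hi1, hi2, rfl⟩ | ⟨i, hi1, hi2, rfl⟩ <;>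
    rcases hy with rfl | rfl | ⟨j, hj1, hj2, rfl⟩ | ⟨j, hj1, hj2, rfl⟩ | ⟨j, hj1, hj2, rfl⟩
  -- x = sZ
  · exact Or.inl (zl n _)
  · exact Or.inl (zl n _)
  · exact Or.inl (zl n _)
  · exact Or.inl (zl n _)
  · exact Or.inl (zl n _)
  -- x = sB
  · exact Or.inl (zr n _)
  · exact Or.inl (hbb n)
  · exact Or.inr (Or.inr (Or.inr (Or.inr ⟨j, hj1, hj2, rfl⟩)))
  · -- sB * (sA j * sB)
    refine Or.inl ?_
    rw [← mul_assoc]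
    exact hBAB n hj1
  · -- sB * (sB * sA j)
    refine Or.inl ?_
    rw [← mul_assoc, hbb n, zl n]
  -- x = sA i
  · exact Or.inl (zr n _)
  · exact Or.inr (Or.inr (Or.inr (Or.inl ⟨i, hi1, hi2, rfl⟩)))
  · exact hAj i j hi1 hj1
  · -- sA i * (sA j * sB)
    rw [← mul_assoc, hAA n hi1 hj1]
    rcases le_or_gt (i + j) n with h | h
    · exact Or.inr (Or.inr (Or.inr (Or.inl ⟨i + j, by omega, h, rfl⟩)))
    · rw [hA0 n (by omega), zl n]; exact Or.inl rfl
  · -- sA i * (sB * sA j)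
    refine Or.inl ?_
    rw [← mul_assoc]
    exact hABA n hi1 hj1
  -- x = sA i * sB
  · exact Or.inl (zr n _)
  · -- (sA i * sB) * sB
    refine Or.inl ?_
    rw [mul_assoc, hbb n, zr n]
  · exact Or.inl (hABA n hi1 hj1)
  · -- (sA i * sB) * (sA j * sB)
    refine Or.inl ?_
    rw [← mul_assoc, hABA n hi1 hj1, zl n]
  · -- (sA i * sB) * (sB * sA j)
    refine Or.inl ?_
    rw [← mul_assoc, mul_assoc (sA n i) (sB n) (sB n), hbb n, zr n, zl n]
  -- x = sB * sA i
  · exact Or.inl (zr n _)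
  · exact Or.inl (hBAB n hi1)
  · -- (sB * sA i) * sA j
    rw [mul_assoc, hAA n hi1 hj1]
    rcases le_or_gt (i + j) n with h | h
    · exact Or.inr (Or.inr (Or.inr (Or.inr ⟨i + j, by omega, h, rfl⟩)))
    · rw [hA0 n (by omega), zr n]; exact Or.inl rfl
  · -- (sB * sA i) * (sA j * sB)
    refine Or.inl ?_
    rw [← mul_assoc, mul_assoc (sB n) (sA n i) (sA n j), hAA n hi1 hj1]
    exact hBAB n (by omega)
  · -- (sB * sA i) * (sB * sA j)
    refine Or.inl ?_
    rw [← mul_assoc, hBAB n hi1, zl n]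

theorem all_inS (n : ℕ) (hn : 1 ≤ n) (x : Sn n) : inS n x := by
  induction x using Quotient.ind with
  | _ p =>
    show inS n (smk n p)
    induction p using WithZero.recZeroCoe with
    | zero => exact Or.inl rfl
    | coe w =>
      induction w using FreeSemigroup.recOnMul with
      | ih1 c =>
        cases c with
        | false => exact Or.inr (Or.inr (Or.inl ⟨1, le_rfl, hn, rfl⟩))
        | true => exact Or.inr (Or.inl rfl)
      | ih2 u v ihu ihv =>
        rw [smk_coe_mul]
        exact inS_mul n hn ihu ihv

/-! ### Values of `Φ` on the normal forms -/

theorem Φ_sZ (n : ℕ) (hn : 1 ≤ n) : Φ n hn (sZ n) = .Z := rfl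
theorem Φ_sB (n : ℕ) (hn : 1 ≤ n) : Φ n hn (sB n) = .B := rfl

theorem Φ_sA (n : ℕ) (hn : 1 ≤ n) {i : ℕ} (hi1 : 1 ≤ i) (hi2 : i ≤ n) :
    Φ n hn (sA n i) = .A i := by
  show φ n _ = _
  rw [φ_coe, ψ_apow n hn i hi1, cA, if_pos hi2]

theorem Φ_sAB (n : ℕ) (hn : 1 ≤ n) {i : ℕ} (hi1 : 1 ≤ i) (hi2 : i ≤ n) :
    Φ n hn (sA n i * sB n) = .AB i := by
  rw [← sAB_eq]
  show φ n _ = _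
  rw [φ_coe, ψ_mul, ψ_apow n hn i hi1, ψ_gb, cA, if_pos hi2]
  show cAB n i = _
  rw [cAB, if_pos hi2]

theorem Φ_sBA (n : ℕ) (hn : 1 ≤ n) {i : ℕ} (hi1 : 1 ≤ i) (hi2 : i ≤ n) :
    Φ n hn (sB n * sA n i) = .BA i := by
  rw [← sBA_eq]
  show φ n _ = _
  rw [φ_coe, ψ_mul, ψ_apow n hn i hi1, ψ_gb, cA, if_pos hi2]
  show cBA n i = _
  rw [cBA, if_pos hi2]

/-! ### The list of all elements -/

def L (n : ℕ) : List (Sn n) :=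
  sZ n :: sB n :: (((List.range n).map fun k => sA n (k + 1)) ++
    ((List.range n).map fun k => sA n (k + 1) * sB n) ++
    ((List.range n).map fun k => sB n * sA n (k + 1)))

theorem L_length (n : ℕ) : (L n).length = 3 * n + 2 := by
  simp [L]
  omega

theorem L_complete (n : ℕ) (hn : 1 ≤ n) (x : Sn n) : x ∈ L n := by
  rcases all_inS n hn x with rfl | rfl | ⟨i, hi1, hi2, rfl⟩ | ⟨i, hi1, hi2, rfl⟩ |
    ⟨i, hi1, hi2, rfl⟩
  · exact List.mem_cons_self
  · exact List.mem_cons_of_mem _ List.mem_cons_self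
  · refine List.mem_cons_of_mem _ (List.mem_cons_of_mem _ ?_)
    refine List.mem_append_left _ (List.mem_append_left _ ?_)
    exact List.mem_map.2 ⟨i - 1, List.mem_range.2 (by omega), by congr 1; omega⟩
  · refine List.mem_cons_of_mem _ (List.mem_cons_of_mem _ ?_)
    refine List.mem_append_left _ (List.mem_append_right _ ?_)
    exact List.mem_map.2 ⟨i - 1, List.mem_range.2 (by omega), by congr 2; omega⟩
  · refine List.mem_cons_of_mem _ (List.mem_cons_of_mem _ ?_)
    refine List.mem_append_right _ ?_
    exact List.mem_map.2 ⟨i - 1, List.mem_range.2 (by omega), by congr 2; omega⟩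

theorem L_map_Φ (n : ℕ) (hn : 1 ≤ n) :
    (L n).map (Φ n hn) = T.Z :: T.B :: (((List.range n).map fun k => T.A (k + 1)) ++
      ((List.range n).map fun k => T.AB (k + 1)) ++
      ((List.range n).map fun k => T.BA (k + 1))) := by
  simp only [L, List.map_cons, List.map_append, List.map_map]
  rw [Φ_sZ, Φ_sB]
  congr 1
  congr 1
  congr 1
  congr 1
  · exact List.map_congr_left fun k hk =>
      Φ_sA n hn (by omega) (by simpa using List.mem_range.1 hk)
  · exact List.map_congr_left fun k hk =>
      Φ_sAB n hn (by omega) (by simpa using List.mem_range.1 hk)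
  · exact List.map_congr_left fun k hk =>
      Φ_sBA n hn (by omega) (by simpa using List.mem_range.1 hk)

theorem L_nodup (n : ℕ) (hn : 1 ≤ n) : (L n).Nodup := by
  apply List.Nodup.of_map (Φ n hn)
  rw [L_map_Φ n hn]
  refine List.Nodup.cons ?_ (List.Nodup.cons ?_ ?_)
  · simp [List.mem_append, List.mem_map]
  · simp [List.mem_append, List.mem_map]
  · refine List.Nodup.append (List.Nodup.append ?_ ?_ ?_) ?_ ?_
    · exact (List.nodup_range : (List.range n).Nodup).map fun a b h => by
        cases h; rfl
    · exact (List.nodup_range : (List.range n).Nodup).map fun a b h => by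
        cases h; rfl
    · intro x hx hy
      simp only [List.mem_map, List.mem_range] at hx hy
      obtain ⟨a, _, rfl⟩ := hx
      obtain ⟨b, _, h⟩ := hy
      exact absurd h (by simp)
    · exact (List.nodup_range : (List.range n).Nodup).map fun a b h => by
        cases h; rfl
    · intro x hx hy
      simp only [List.mem_append, List.mem_map, List.mem_range] at hx hy
      rcases hx with ⟨a, _, rfl⟩ | ⟨a, _, rfl⟩ <;>
        · obtain ⟨b, _, h⟩ := hy
          exact absurd h (by simp)

end SnProof

open SnProof

theorem Sn_card_and_elements (n : ℕ) (hn : 1 ≤ n) :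
    Nat.card (Sn n) = 3 * n + 2 ∧
    (Set.univ : Set (Sn n)) =
      {smk n 0, smk n ((gb : FreeSemigroup Bool) : W2)} ∪
      {x | ∃ i : ℕ, 1 ≤ i ∧ i ≤ n ∧ x = smk n ((apow i : FreeSemigroup Bool) : W2)} ∪
      {x | ∃ i : ℕ, 1 ≤ i ∧ i ≤ n ∧
        x = smk n ((apow i * gb : FreeSemigroup Bool) : W2)} ∪
      {x | ∃ i : ℕ, 1 ≤ i ∧ i ≤ n ∧
        x = smk n ((gb * apow i : FreeSemigroup Bool) : W2)} := by
  constructor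
  · obtain ⟨f, hf⟩ := List.Nodup.getBijectionOfForallMemList (L n) (L_nodup n hn)
      (L_complete n hn)
    have h := Nat.card_eq_of_bijective f hf
    rw [Nat.card_eq_fintype_card, Fintype.card_fin, L_length] at h
    omega
  · ext x
    simp only [Set.mem_univ, true_iff, Set.mem_union, Set.mem_insert_iff,
      Set.mem_singleton_iff, Set.mem_setOf_eq]
    rcases all_inS n hn x with h | h | ⟨i, hi1, hi2, h⟩ | ⟨i, hi1, hi2, h⟩ | ⟨i, hi1, hi2, h⟩
    · exact Or.inl (Or.inl (Or.inl (Or.inl h)))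
    · exact Or.inl (Or.inl (Or.inl (Or.inr h)))
    · exact Or.inl (Or.inl (Or.inr ⟨i, hi1, hi2, h⟩))
    · exact Or.inl (Or.inr ⟨i, hi1, hi2, by rw [sAB_eq]; exact h⟩)
    · exact Or.inr ⟨i, hi1, hi2, by rw [sBA_eq]; exact h⟩
end

section
/- In the commuting graph of Sₙ = ⟨a, b | a^{n+1} = b² = 0, aba = 0, b aⁱ b = 0 ∀ i⟩, the set {aⁱb : 1 ≤ i ≤ n−1} ∪ {b aʲ : 1 ≤ j ≤ n−1} ∪ {b} is a clique of size 2n − 1. -/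
/-- The elements `{aⁱb : 1 ≤ i ≤ n−1} ∪ {baʲ : 1 ≤ j ≤ n−1} ∪ {b}` of `Sₙ`. -/
def SnCliqueElts (n : ℕ) : Set (Sn n) :=
  {x | ∃ i : ℕ, 1 ≤ i ∧ i ≤ n - 1 ∧
      x = smk n ((apow i * gb : FreeSemigroup Bool) : W2)} ∪
  {x | ∃ j : ℕ, 1 ≤ j ∧ j ≤ n - 1 ∧
      x = smk n ((gb * apow j : FreeSemigroup Bool) : W2)} ∪
  {smk n ((gb : FreeSemigroup Bool) : W2)}


/-! ### The normal-form model semigroup -/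

inductive NF where
  | Z : NF
  | A : ℕ → NF
  | B : NF
  | AB : ℕ → NF
  | BA : ℕ → NF
  deriving DecidableEq

def NF.mul (n : ℕ) : NF → NF → NF
  | .Z, _ => .Z
  | .A i, .A j => if i + j + 2 ≤ n then .A (i+j+1) else .Z
  | .A i, .B => if i + 1 ≤ n then .AB i else .Z
  | .A i, .AB j => if i + j + 2 ≤ n then .AB (i+j+1) else .Z
  | .A _, .BA _ => .Z
  | .A _, .Z => .Z
  | .B, .A j => if j + 1 ≤ n then .BA j else .Z
  | .B, _ => .Z
  | .AB _, _ => .Z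
  | .BA i, .A j => if i + j + 2 ≤ n then .BA (i+j+1) else .Z
  | .BA _, _ => .Z

def Tn (_n : ℕ) : Type := NF

instance (n : ℕ) : Mul (Tn n) := ⟨NF.mul n⟩

instance (n : ℕ) : Semigroup (Tn n) where
  mul_assoc x y z := by
    show NF.mul n (NF.mul n x y) z = NF.mul n x (NF.mul n y z)
    cases x <;> cases y <;> cases z <;>
      simp only [NF.mul] <;>
      (try split_ifs) <;>
      simp_all [NF.mul] <;>
      (try split_ifs) <;>
      first
        | rfl
        | omega
        | (exfalso; omega)
        | simp_all <;> omega

/-- The hom from the free semigroup. -/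
def psi (n : ℕ) : FreeSemigroup Bool →ₙ* Tn n :=
  FreeSemigroup.lift (fun t : Bool => if t then (NF.B : Tn n) else NF.A 0)

/-- The invariant function on `W2`. -/
def fInv (n : ℕ) : W2 → Tn n :=
  fun x => Option.casesOn (x : Option (FreeSemigroup Bool)) NF.Z (psi n)

lemma fInv_zero (n : ℕ) : fInv n 0 = NF.Z := rfl

lemma fInv_coe (n : ℕ) (w : FreeSemigroup Bool) : fInv n (w : W2) = psi n w := rfl

def tZ (n : ℕ) : Tn n := NF.Z
def tA (n : ℕ) (i : ℕ) : Tn n := NF.A i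
def tB (n : ℕ) : Tn n := NF.B
def tAB (n : ℕ) (i : ℕ) : Tn n := NF.AB i
def tBA (n : ℕ) (i : ℕ) : Tn n := NF.BA i

lemma tZ_mul (n : ℕ) (t : Tn n) : tZ n * t = tZ n := rfl

lemma mul_tZ (n : ℕ) (t : Tn n) : t * tZ n = tZ n := by
  show NF.mul n t .Z = .Z
  cases t <;> rfl

lemma fInv_mul (n : ℕ) (x y : W2) : fInv n (x * y) = fInv n x * fInv n y := by
  induction x using WithZero.recZeroCoe with
  | zero => show fInv n (0 * y) = tZ n * _; rw [zero_mul, tZ_mul]; rfl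
  | coe a =>
    induction y using WithZero.recZeroCoe with
    | zero => show fInv n (_ * 0) = _ * tZ n; rw [mul_zero, mul_tZ]; rfl
    | coe b => rw [← WithZero.coe_mul, fInv_coe, fInv_coe, fInv_coe, map_mul]

lemma psi_ga (n : ℕ) : psi n ga = tA n 0 := FreeSemigroup.lift_of _ _

lemma psi_gb (n : ℕ) : psi n gb = tB n := FreeSemigroup.lift_of _ _

lemma fsPow_add (x : FreeSemigroup Bool) (k l : ℕ) :
    fsPow x k * fsPow x l = fsPow x (k + l + 1) := by
  induction l with
  | zero => rfl
  | succ l ih =>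
    show fsPow x k * (fsPow x l * x) = _
    rw [← mul_assoc, ih]; rfl

lemma fsPow_succ_left (x : FreeSemigroup Bool) (k : ℕ) :
    fsPow x (k + 1) = x * fsPow x k := by
  induction k with
  | zero => rfl
  | succ k ih =>
    show fsPow x (k+1) * x = _
    conv_lhs => rw [ih]
    rw [mul_assoc]; rfl

lemma apow_one : apow 1 = ga := rfl

lemma apow_mul_apow (i j : ℕ) (hi : 1 ≤ i) (hj : 1 ≤ j) :
    apow i * apow j = apow (i + j) := by
  unfold apow
  rw [fsPow_add]
  congr 1
  omega

lemma ga_mul_apow (i : ℕ) (hi : 1 ≤ i) : ga * apow i = apow (i + 1) := by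
  unfold apow
  rw [show i + 1 - 1 = (i - 1) + 1 by omega, fsPow_succ_left]

lemma apow_eq_apow_mul_ga (i : ℕ) (hi : 2 ≤ i) : apow i = apow (i - 1) * ga := by
  unfold apow
  rw [show i - 1 = (i - 1 - 1) + 1 by omega]
  rfl

lemma psi_fsPow (n : ℕ) (hn : 1 ≤ n) (k : ℕ) :
    psi n (fsPow ga k) = if k + 1 ≤ n then tA n k else tZ n := by
  induction k with
  | zero =>
    show psi n ga = _
    rw [psi_ga, if_pos hn]
  | succ k ih =>
    show psi n (fsPow ga k * ga) = _
    rw [map_mul, ih, psi_ga]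
    split_ifs with h1 h2 h3 <;>
      first
        | (show NF.mul n (NF.A k) (NF.A 0) = _
           simp only [NF.mul]; split_ifs <;> first | rfl | omega)
        | omega
        | rfl

lemma fInv_apow (n : ℕ) (hn : 1 ≤ n) (i : ℕ) (hi : 1 ≤ i) :
    fInv n ((apow i : FreeSemigroup Bool) : W2) = if i ≤ n then tA n (i-1) else tZ n := by
  rw [fInv_coe]
  unfold apow
  rw [psi_fsPow n hn]
  congr 1
  simp only [eq_iff_iff]
  omega

lemma snrel_con (n : ℕ) {p q : W2} (h : SnRel n p q) : SnCon n p q :=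
  ConGen.Rel.of p q h

lemma con_mul_left (n : ℕ) (x z : W2) (h : SnCon n z 0) : SnCon n (x * z) 0 := by
  have := (SnCon n).mul ((SnCon n).refl x) h
  rwa [mul_zero] at this

lemma con_mul_right (n : ℕ) (x z : W2) (h : SnCon n z 0) : SnCon n (z * x) 0 := by
  have := (SnCon n).mul h ((SnCon n).refl x)
  rwa [zero_mul] at this

lemma rel_bb (n : ℕ) : SnCon n ((gb * gb : FreeSemigroup Bool) : W2) 0 :=
  snrel_con n (Or.inr (Or.inl ⟨rfl, rfl⟩))

lemma rel_aba (n : ℕ) : SnCon n ((ga * gb * ga : FreeSemigroup Bool) : W2) 0 :=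
  snrel_con n (Or.inr (Or.inr (Or.inl ⟨rfl, rfl⟩)))

lemma rel_bab (n : ℕ) (i : ℕ) (hi : 1 ≤ i) :
    SnCon n ((gb * apow i * gb : FreeSemigroup Bool) : W2) 0 :=
  snrel_con n (Or.inr (Or.inr (Or.inr ⟨i, hi, rfl, rfl⟩)))

lemma hker (n : ℕ) (hn : 1 ≤ n) : ∀ p q : W2, SnRel n p q → fInv n p = fInv n q := by
  rintro p q (⟨hp, hq⟩ | ⟨hp, hq⟩ | ⟨hp, hq⟩ | ⟨i, hi, hp, hq⟩) <;> subst hp <;> subst hq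
  · rw [fInv_apow n hn (n+1) (by omega), if_neg (by omega)]
    rfl
  · rw [fInv_coe, map_mul, psi_gb]
    rfl
  · rw [fInv_coe, map_mul, map_mul, psi_gb, psi_ga]
    show NF.mul n (NF.mul n (.A 0) .B) (.A 0) = .Z
    simp only [NF.mul]
    split_ifs <;> rfl
  · rw [fInv_coe, map_mul, map_mul, psi_gb]
    have : psi n (apow i) = if i ≤ n then tA n (i-1) else tZ n := fInv_apow n hn i hi
    rw [this]
    split_ifs with h
    · show NF.mul n (NF.mul n .B (.A (i-1))) .B = .Z
      simp only [NF.mul]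
      split_ifs <;> rfl
    · rfl

lemma smk_eq_imp_fInv_eq (n : ℕ) (hn : 1 ≤ n) {x y : W2} (h : smk n x = smk n y) :
    fInv n x = fInv n y := by
  have hle : SnCon n ≤ Con.ker (⟨fInv n, fInv_mul n⟩ : W2 →ₙ* Tn n) :=
    Con.conGen_le.mpr (hker n hn)
  exact hle ((Con.eq (SnCon n)).mp h)

lemma smk_mul (n : ℕ) (x y : W2) : smk n (x * y) = smk n x * smk n y := rfl

lemma smk_eq_zero_of_con (n : ℕ) {x : W2} (h : SnCon n x 0) : smk n x = smk n 0 :=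
  (Con.eq (SnCon n)).mpr h

/-- The clique words. -/
def CW (w : FreeSemigroup Bool) : Prop :=
  (∃ i, 1 ≤ i ∧ w = apow i * gb) ∨ (∃ j, 1 ≤ j ∧ w = gb * apow j) ∨ w = gb

lemma prod_con_zero (n : ℕ) (w1 w2 : FreeSemigroup Bool) (h1 : CW w1) (h2 : CW w2) :
    SnCon n ((w1 : W2) * (w2 : W2)) 0 := by
  rw [← WithZero.coe_mul]
  rcases h1 with ⟨i, hi, rfl⟩ | ⟨i, hi, rfl⟩ | rfl <;>
    rcases h2 with ⟨j, hj, rfl⟩ | ⟨j, hj, rfl⟩ | rfl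
  · rw [show (apow i * gb) * (apow j * gb) = apow i * (gb * apow j * gb) by
      simp [mul_assoc], WithZero.coe_mul]
    exact con_mul_left n _ _ (rel_bab n j hj)
  · rw [show (apow i * gb) * (gb * apow j) = apow i * ((gb * gb) * apow j) by
      simp [mul_assoc], WithZero.coe_mul, WithZero.coe_mul]
    exact con_mul_left n _ _ (con_mul_right n _ _ (rel_bb n))
  · rw [show (apow i * gb) * gb = apow i * (gb * gb) by
      simp [mul_assoc], WithZero.coe_mul]
    exact con_mul_left n _ _ (rel_bb n)
  · rw [show (gb * apow i) * (apow j * gb) = gb * apow (i + j) * gb by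
      rw [mul_assoc, ← mul_assoc (apow i), apow_mul_apow i j hi hj, mul_assoc]]
    exact rel_bab n (i + j) (by omega)
  · rw [show (gb * apow i) * (gb * apow j) = (gb * apow i * gb) * apow j by
      simp [mul_assoc], WithZero.coe_mul]
    exact con_mul_right n _ _ (rel_bab n i hi)
  · exact rel_bab n i hi
  · rw [show gb * (apow j * gb) = gb * apow j * gb by rw [mul_assoc]]
    exact rel_bab n j hj
  · rw [show gb * (gb * apow j) = (gb * gb) * apow j by rw [mul_assoc],
      WithZero.coe_mul]
    exact con_mul_right n _ _ (rel_bb n)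
  · exact rel_bb n

lemma fInv_ab (n : ℕ) (hn : 1 ≤ n) (i : ℕ) (hi : 1 ≤ i) (hi2 : i ≤ n) :
    fInv n ((apow i * gb : FreeSemigroup Bool) : W2) = tAB n (i - 1) := by
  rw [fInv_coe, map_mul, psi_gb]
  have := fInv_apow n hn i hi
  rw [fInv_coe] at this
  rw [this, if_pos hi2]
  show NF.mul n (.A (i-1)) .B = .AB (i-1)
  simp only [NF.mul]
  rw [if_pos (by omega)]

lemma fInv_ba (n : ℕ) (hn : 1 ≤ n) (j : ℕ) (hj : 1 ≤ j) (hj2 : j ≤ n) :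
    fInv n ((gb * apow j : FreeSemigroup Bool) : W2) = tBA n (j - 1) := by
  rw [fInv_coe, map_mul, psi_gb]
  have := fInv_apow n hn j hj
  rw [fInv_coe] at this
  rw [this, if_pos hj2]
  show NF.mul n .B (.A (j-1)) = .BA (j-1)
  simp only [NF.mul]
  rw [if_pos (by omega)]

lemma fInv_b (n : ℕ) : fInv n ((gb : FreeSemigroup Bool) : W2) = tB n := by
  rw [fInv_coe, psi_gb]

lemma smk_ne_of_fInv (n : ℕ) (hn : 1 ≤ n) {x y : W2} (h : fInv n x ≠ fInv n y) :
    smk n x ≠ smk n y := fun he => h (smk_eq_imp_fInv_eq n hn he)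

lemma con_abg (n : ℕ) (i : ℕ) (hi : 1 ≤ i) :
    SnCon n (((apow i * gb) * ga : FreeSemigroup Bool) : W2) 0 := by
  rcases Nat.lt_or_ge i 2 with h | h
  · have : i = 1 := by omega
    subst this
    exact rel_aba n
  · rw [show (apow i * gb) * ga = apow (i-1) * (ga * gb * ga) by
      rw [apow_eq_apow_mul_ga i h]; simp [mul_assoc], WithZero.coe_mul]
    exact con_mul_left n _ _ (rel_aba n)

lemma apow_succ_left (j : ℕ) (hj : 2 ≤ j) : apow j = ga * apow (j - 1) := by
  have := ga_mul_apow (j-1) (by omega)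
  rw [show j - 1 + 1 = j by omega] at this
  exact this.symm

lemma con_gba (n : ℕ) (j : ℕ) (hj : 1 ≤ j) :
    SnCon n ((ga * (gb * apow j) : FreeSemigroup Bool) : W2) 0 := by
  rcases Nat.lt_or_ge j 2 with h | h
  · have : j = 1 := by omega
    subst this
    rw [show ga * (gb * apow 1) = ga * gb * ga by rw [mul_assoc, apow_one]]
    exact rel_aba n
  · rw [show ga * (gb * apow j) = (ga * gb * ga) * apow (j-1) by
      rw [apow_succ_left j h]; simp [mul_assoc], WithZero.coe_mul]
    exact con_mul_right n _ _ (rel_aba n)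

lemma notCentral_ab (n : ℕ) (hn : 1 ≤ n) (i : ℕ) (hi : 1 ≤ i) (hi2 : i ≤ n - 1) :
    smk n ((apow i * gb : FreeSemigroup Bool) : W2) ∉ Set.center (Sn n) := by
  intro hc
  have hcomm := ((Set.mem_center_iff.mp hc).comm (smk n ((ga : FreeSemigroup Bool) : W2))).eq
  rw [← smk_mul, ← smk_mul] at hcomm
  have h1 : smk n (((apow i * gb : FreeSemigroup Bool) : W2) * ((ga : FreeSemigroup Bool) : W2)) = smk n 0 := by
    rw [← WithZero.coe_mul]
    exact smk_eq_zero_of_con n (con_abg n i hi)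
  rw [h1] at hcomm
  have h2 : fInv n (((ga : FreeSemigroup Bool) : W2) * ((apow i * gb : FreeSemigroup Bool) : W2)) ≠ fInv n 0 := by
    rw [← WithZero.coe_mul,
      show ga * (apow i * gb) = apow (i+1) * gb by rw [← mul_assoc, ga_mul_apow i hi],
      fInv_ab n hn (i+1) (by omega) (by omega)]
    simp [tAB, fInv_zero]
    exact nofun
  exact smk_ne_of_fInv n hn h2 hcomm.symm

lemma notCentral_ba (n : ℕ) (hn : 1 ≤ n) (j : ℕ) (hj : 1 ≤ j) (hj2 : j ≤ n - 1) :
    smk n ((gb * apow j : FreeSemigroup Bool) : W2) ∉ Set.center (Sn n) := by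
  intro hc
  have hcomm := ((Set.mem_center_iff.mp hc).comm (smk n ((ga : FreeSemigroup Bool) : W2))).eq
  rw [← smk_mul, ← smk_mul] at hcomm
  have h1 : smk n (((ga : FreeSemigroup Bool) : W2) * ((gb * apow j : FreeSemigroup Bool) : W2)) = smk n 0 := by
    rw [← WithZero.coe_mul]
    exact smk_eq_zero_of_con n (con_gba n j hj)
  rw [h1] at hcomm
  have h2 : fInv n (((gb * apow j : FreeSemigroup Bool) : W2) * ((ga : FreeSemigroup Bool) : W2)) ≠ fInv n 0 := by
    rw [← WithZero.coe_mul,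
      show (gb * apow j) * ga = gb * apow (j+1) by
        rw [mul_assoc, show apow j * ga = apow (j+1) by
          rw [show ga = apow 1 from rfl, apow_mul_apow j 1 hj le_rfl]],
      fInv_ba n hn (j+1) (by omega) (by omega)]
    simp [tBA, fInv_zero]
    exact nofun
  exact smk_ne_of_fInv n hn h2 hcomm

lemma notCentral_b (n : ℕ) (hn : 1 ≤ n) :
    smk n ((gb : FreeSemigroup Bool) : W2) ∉ Set.center (Sn n) := by
  intro hc
  have hcomm := ((Set.mem_center_iff.mp hc).comm (smk n ((ga : FreeSemigroup Bool) : W2))).eq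
  rw [← smk_mul, ← smk_mul] at hcomm
  apply smk_ne_of_fInv n hn (x := ((gb : FreeSemigroup Bool) : W2) * ((ga : FreeSemigroup Bool) : W2))
    (y := ((ga : FreeSemigroup Bool) : W2) * ((gb : FreeSemigroup Bool) : W2)) ?_ hcomm
  rw [← WithZero.coe_mul, ← WithZero.coe_mul,
    show gb * ga = gb * apow 1 from rfl, show ga * gb = apow 1 * gb from rfl,
    fInv_ba n hn 1 le_rfl hn, fInv_ab n hn 1 le_rfl hn]
  simp [tBA, tAB]
  exact nofun

lemma mem_clique_elts (n : ℕ) {x : Sn n} (hx : x ∈ SnCliqueElts n) :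
    ∃ w : FreeSemigroup Bool, CW w ∧ x = smk n (w : W2) := by
  rcases hx with (⟨i, hi, _, rfl⟩ | ⟨j, hj, _, rfl⟩) | hx
  · exact ⟨apow i * gb, Or.inl ⟨i, hi, rfl⟩, rfl⟩
  · exact ⟨gb * apow j, Or.inr (Or.inl ⟨j, hj, rfl⟩), rfl⟩
  · exact ⟨gb, Or.inr (Or.inr rfl), by rw [hx]⟩

theorem Sn_clique (n : ℕ) (hn : 1 ≤ n) :
    SnCliqueElts n ⊆ (Set.center (Sn n))ᶜ ∧
    (CommutingGraph (Sn n)).IsClique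
      {v : {x : Sn n // x ∉ Set.center (Sn n)} | (v : Sn n) ∈ SnCliqueElts n} ∧
    Set.ncard
      {v : {x : Sn n // x ∉ Set.center (Sn n)} | (v : Sn n) ∈ SnCliqueElts n} =
      2 * n - 1 := by
  -- Part 1: non-centrality
  have part1 : SnCliqueElts n ⊆ (Set.center (Sn n))ᶜ := by
    rintro x ((⟨i, hi, hi2, rfl⟩ | ⟨j, hj, hj2, rfl⟩) | hx)
    · exact notCentral_ab n hn i hi hi2
    · exact notCentral_ba n hn j hj hj2
    · rw [Set.mem_singleton_iff] at hx
      rw [hx]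
      exact notCentral_b n hn
  refine ⟨part1, ?_, ?_⟩
  -- Part 2: clique
  · intro u hu v hv hne
    refine (⟨hne, ?_⟩ : _ ≠ _ ∧ _)
    obtain ⟨w1, hw1, he1⟩ := mem_clique_elts n hu
    obtain ⟨w2, hw2, he2⟩ := mem_clique_elts n hv
    show (u : Sn n) * v = (v : Sn n) * u
    rw [he1, he2, ← smk_mul, ← smk_mul,
      smk_eq_zero_of_con n (prod_con_zero n w1 w2 hw1 hw2),
      smk_eq_zero_of_con n (prod_con_zero n w2 w1 hw2 hw1)]
  -- Part 3: cardinality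
  · set C := SnCliqueElts n with hC
    set V := {v : {x : Sn n // x ∉ Set.center (Sn n)} | (v : Sn n) ∈ C} with hV
    have himg : Subtype.val '' V = C := by
      ext x
      constructor
      · rintro ⟨v, hv, rfl⟩
        exact hv
      · intro hx
        exact ⟨⟨x, part1 hx⟩, hx, rfl⟩
    have hne : V.ncard = C.ncard := by
      rw [← himg, Set.ncard_image_of_injective V Subtype.val_injective]
    rw [hne]
    -- now compute C.ncard
    have hS1 : {x : Sn n | ∃ i : ℕ, 1 ≤ i ∧ i ≤ n - 1 ∧
        x = smk n ((apow i * gb : FreeSemigroup Bool) : W2)}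
        = (fun i => smk n ((apow i * gb : FreeSemigroup Bool) : W2)) '' Set.Icc 1 (n-1) := by
      ext x
      simp only [Set.mem_setOf_eq, Set.mem_image, Set.mem_Icc]
      constructor
      · rintro ⟨i, h1, h2, rfl⟩; exact ⟨i, ⟨h1, h2⟩, rfl⟩
      · rintro ⟨i, ⟨h1, h2⟩, rfl⟩; exact ⟨i, h1, h2, rfl⟩
    have hS2 : {x : Sn n | ∃ j : ℕ, 1 ≤ j ∧ j ≤ n - 1 ∧
        x = smk n ((gb * apow j : FreeSemigroup Bool) : W2)}
        = (fun j => smk n ((gb * apow j : FreeSemigroup Bool) : W2)) '' Set.Icc 1 (n-1) := by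
      ext x
      simp only [Set.mem_setOf_eq, Set.mem_image, Set.mem_Icc]
      constructor
      · rintro ⟨i, h1, h2, rfl⟩; exact ⟨i, ⟨h1, h2⟩, rfl⟩
      · rintro ⟨i, ⟨h1, h2⟩, rfl⟩; exact ⟨i, h1, h2, rfl⟩
    have hinj1 : Set.InjOn (fun i => smk n ((apow i * gb : FreeSemigroup Bool) : W2))
        (Set.Icc 1 (n-1)) := by
      rintro i ⟨hi1, hi2⟩ j ⟨hj1, hj2⟩ h
      have := smk_eq_imp_fInv_eq n hn h
      rw [fInv_ab n hn i hi1 (by omega), fInv_ab n hn j hj1 (by omega)] at this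
      have h2 : (NF.AB (i-1)) = NF.AB (j-1) := this
      have := NF.AB.inj h2
      omega
    have hinj2 : Set.InjOn (fun j => smk n ((gb * apow j : FreeSemigroup Bool) : W2))
        (Set.Icc 1 (n-1)) := by
      rintro i ⟨hi1, hi2⟩ j ⟨hj1, hj2⟩ h
      have := smk_eq_imp_fInv_eq n hn h
      rw [fInv_ba n hn i hi1 (by omega), fInv_ba n hn j hj1 (by omega)] at this
      have h2 : (NF.BA (i-1)) = NF.BA (j-1) := this
      have := NF.BA.inj h2
      omega
    have hcard_Icc : (Set.Icc 1 (n-1)).ncard = n - 1 := by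
      rw [← Finset.coe_Icc, Set.ncard_coe_finset, Nat.card_Icc]
      omega
    have hfin1 : ((fun i => smk n ((apow i * gb : FreeSemigroup Bool) : W2)) ''
        Set.Icc 1 (n-1)).Finite := (Set.finite_Icc 1 (n-1)).image _
    have hfin2 : ((fun j => smk n ((gb * apow j : FreeSemigroup Bool) : W2)) ''
        Set.Icc 1 (n-1)).Finite := (Set.finite_Icc 1 (n-1)).image _
    have hd12 : Disjoint
        ((fun i => smk n ((apow i * gb : FreeSemigroup Bool) : W2)) '' Set.Icc 1 (n-1))
        ((fun j => smk n ((gb * apow j : FreeSemigroup Bool) : W2)) '' Set.Icc 1 (n-1)) := by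
      rw [Set.disjoint_left]
      rintro x ⟨i, ⟨hi1, hi2⟩, rfl⟩ ⟨j, ⟨hj1, hj2⟩, hj⟩
      have := smk_eq_imp_fInv_eq n hn hj
      rw [fInv_ba n hn j hj1 (by omega), fInv_ab n hn i hi1 (by omega)] at this
      simp [tAB, tBA] at this
    have hd3 : Disjoint
        (((fun i => smk n ((apow i * gb : FreeSemigroup Bool) : W2)) '' Set.Icc 1 (n-1)) ∪
         ((fun j => smk n ((gb * apow j : FreeSemigroup Bool) : W2)) '' Set.Icc 1 (n-1)))
        ({smk n ((gb : FreeSemigroup Bool) : W2)} : Set (Sn n)) := by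
      rw [Set.disjoint_right]
      rintro x hx (⟨i, ⟨hi1, hi2⟩, hi⟩ | ⟨j, ⟨hj1, hj2⟩, hj⟩)
      · rw [Set.mem_singleton_iff] at hx
        subst hx
        have := smk_eq_imp_fInv_eq n hn hi
        rw [fInv_ab n hn i hi1 (by omega), fInv_b n] at this
        simp [tAB, tB] at this
      · rw [Set.mem_singleton_iff] at hx
        subst hx
        have := smk_eq_imp_fInv_eq n hn hj
        rw [fInv_ba n hn j hj1 (by omega), fInv_b n] at this
        simp [tBA, tB] at this
    rw [hC]
    unfold SnCliqueElts
    rw [hS1, hS2]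
    rw [Set.ncard_union_eq hd3 ((hfin1.union hfin2)) (Set.finite_singleton _),
      Set.ncard_union_eq hd12 hfin1 hfin2,
      Set.ncard_image_of_injOn hinj1, Set.ncard_image_of_injOn hinj2,
      hcard_Icc, Set.ncard_singleton]
    omega
end

section
/- For semigroups S and T with zero, the clique number of the commuting graph of the null union S • T equals ω(Γ(S)) + ω(Γ(T)). -/
/-- The null union `S • T` of two semigroups with zero: the zeros are
identified and all cross products are `0`.  It is realized as the
subsemigroup `{(s, t) | s = 0 ∨ t = 0}` of `S × T`, where a nonzero
`s ∈ S` corresponds to `(s, 0)`, a nonzero `t ∈ T` to `(0, t)`, and the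
common zero to `(0, 0)`. -/
def NullUnion (S T : Type*) [MulZeroClass S] [MulZeroClass T] : Type _ :=
  {p : S × T // p.1 = 0 ∨ p.2 = 0}

instance (S T : Type*) [MulZeroClass S] [MulZeroClass T] : Mul (NullUnion S T) :=
  ⟨fun x y => ⟨(x.1.1 * y.1.1, x.1.2 * y.1.2), by
    rcases x.2 with h | h
    · exact Or.inl (by rw [h, zero_mul])
    · exact Or.inr (by rw [h, zero_mul])⟩⟩

instance (S T : Type*) [MulZeroClass S] [MulZeroClass T] : Zero (NullUnion S T) :=
  ⟨⟨(0, 0), Or.inl rfl⟩⟩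

instance (S T : Type*) [SemigroupWithZero S] [SemigroupWithZero T] :
    Semigroup (NullUnion S T) where
  mul_assoc a b c := Subtype.ext (Prod.ext (mul_assoc _ _ _) (mul_assoc _ _ _))

section Aux
variable {S T : Type*} [SemigroupWithZero S] [SemigroupWithZero T]

lemma NullUnion.mul_val (x y : NullUnion S T) :
    (x * y).1 = (x.1.1 * y.1.1, x.1.2 * y.1.2) := rfl

lemma NullUnion.mem_center_iff (x : NullUnion S T) :
    x ∈ Set.center (NullUnion S T) ↔ x.1.1 ∈ Set.center S ∧ x.1.2 ∈ Set.center T := by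
  rw [Semigroup.mem_center_iff]
  constructor
  · intro h
    constructor
    · rw [Semigroup.mem_center_iff]
      intro a
      have := congrArg (fun z : NullUnion S T => z.1.1) (h ⟨(a, 0), Or.inr rfl⟩)
      exact this
    · rw [Semigroup.mem_center_iff]
      intro b
      have := congrArg (fun z : NullUnion S T => z.1.2) (h ⟨(0, b), Or.inl rfl⟩)
      exact this
  · rintro ⟨hs, ht⟩ y
    rw [Semigroup.mem_center_iff] at hs ht
    exact Subtype.ext (Prod.ext (hs _) (ht _))

lemma NullUnion.zero_mem_center' {M : Type*} [SemigroupWithZero M] :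
    (0 : M) ∈ Set.center M := by
  rw [Semigroup.mem_center_iff]; simp

instance [Finite S] [Finite T] : Finite (NullUnion S T) :=
  inferInstanceAs (Finite {p : S × T // p.1 = 0 ∨ p.2 = 0})

/-- Embedding of noncentral `S`-elements into the null union's noncentral elements. -/
def NullUnion.eS (s : {x : S // x ∉ Set.center S}) :
    {x : NullUnion S T // x ∉ Set.center (NullUnion S T)} :=
  ⟨⟨(s.1, 0), Or.inr rfl⟩, fun h => s.2 ((NullUnion.mem_center_iff _).1 h).1⟩

def NullUnion.eT (t : {x : T // x ∉ Set.center T}) :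
    {x : NullUnion S T // x ∉ Set.center (NullUnion S T)} :=
  ⟨⟨(0, t.1), Or.inl rfl⟩, fun h => t.2 ((NullUnion.mem_center_iff _).1 h).2⟩

lemma NullUnion.eS_injective : Function.Injective (NullUnion.eS (S := S) (T := T)) := by
  intro s s' h
  exact Subtype.ext (congrArg (fun z => z.1.1.1) h)

lemma NullUnion.eT_injective : Function.Injective (NullUnion.eT (S := S) (T := T)) := by
  intro t t' h
  exact Subtype.ext (congrArg (fun z => z.1.1.2) h)

lemma NullUnion.fst_eq_zero {x : NullUnion S T}
    (hx : x ∉ Set.center (NullUnion S T)) (h : x.1.1 ∈ Set.center S) : x.1.1 = 0 := by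
  rcases x.2 with h0 | h0
  · exact h0
  · refine absurd ((NullUnion.mem_center_iff x).2 ⟨h, ?_⟩) hx
    rw [h0]; exact NullUnion.zero_mem_center'

lemma NullUnion.snd_eq_zero {x : NullUnion S T}
    (h : x.1.1 ∉ Set.center S) : x.1.2 = 0 := by
  rcases x.2 with h0 | h0
  · refine absurd (show x.1.1 ∈ Set.center S from ?_) h
    rw [h0]; exact NullUnion.zero_mem_center'
  · exact h0

open Classical in
/-- Split a noncentral element of the null union into its `S`-part or `T`-part. -/
noncomputable def NullUnion.toSum
    (x : {x : NullUnion S T // x ∉ Set.center (NullUnion S T)}) :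
    {s : S // s ∉ Set.center S} ⊕ {t : T // t ∉ Set.center T} :=
  if h : x.1.1.1 ∈ Set.center S then
    Sum.inr ⟨x.1.1.2, fun ht => x.2 ((NullUnion.mem_center_iff _).2 ⟨h, ht⟩)⟩
  else Sum.inl ⟨x.1.1.1, h⟩

lemma NullUnion.toSum_eq_inl {x : {x : NullUnion S T // x ∉ Set.center (NullUnion S T)}}
    {a : {s : S // s ∉ Set.center S}} (h : NullUnion.toSum x = Sum.inl a) :
    x.1.1.1 = a.1 ∧ x.1.1.2 = 0 := by
  unfold NullUnion.toSum at h
  split at h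
  · exact absurd h (by simp)
  · next hc =>
    refine ⟨?_, NullUnion.snd_eq_zero hc⟩
    have := congrArg (fun z => Sum.elim Subtype.val (fun _ => (0 : S)) z) h
    simpa using this

lemma NullUnion.toSum_eq_inr {x : {x : NullUnion S T // x ∉ Set.center (NullUnion S T)}}
    {b : {t : T // t ∉ Set.center T}} (h : NullUnion.toSum x = Sum.inr b) :
    x.1.1.2 = b.1 ∧ x.1.1.1 = 0 := by
  unfold NullUnion.toSum at h
  split at h
  · next hc =>
    refine ⟨?_, NullUnion.fst_eq_zero x.2 hc⟩
    have := congrArg (fun z => Sum.elim (fun _ => (0 : T)) Subtype.val z) h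
    simpa using this
  · exact absurd h (by simp)

lemma NullUnion.toSum_injective :
    Function.Injective (NullUnion.toSum (S := S) (T := T)) := by
  intro x y h
  rcases hx : NullUnion.toSum x with a | b
  · rw [hx] at h
    obtain ⟨h1, h2⟩ := NullUnion.toSum_eq_inl hx
    obtain ⟨h3, h4⟩ := NullUnion.toSum_eq_inl h.symm
    exact Subtype.ext (Subtype.ext (Prod.ext (h1.trans h3.symm) (h2.trans h4.symm)))
  · rw [hx] at h
    obtain ⟨h1, h2⟩ := NullUnion.toSum_eq_inr hx
    obtain ⟨h3, h4⟩ := NullUnion.toSum_eq_inr h.symm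
    exact Subtype.ext (Subtype.ext (Prod.ext (h2.trans h4.symm) (h1.trans h3.symm)))

end Aux

theorem nullUnion_cliqueNum (S T : Type*) [SemigroupWithZero S]
    [SemigroupWithZero T] [Finite S] [Finite T] :
    (CommutingGraph (NullUnion S T)).cliqueNum =
      (CommutingGraph S).cliqueNum + (CommutingGraph T).cliqueNum := by
  classical
  letI : Fintype {x : NullUnion S T // x ∉ Set.center (NullUnion S T)} := Fintype.ofFinite _
  letI : Fintype {x : S // x ∉ Set.center S} := Fintype.ofFinite _
  letI : Fintype {x : T // x ∉ Set.center T} := Fintype.ofFinite _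
  apply le_antisymm
  · -- ≤ : split a maximum clique of the null union
    obtain ⟨c, hc⟩ := (CommutingGraph (NullUnion S T)).exists_isNClique_cliqueNum
    set u := c.image NullUnion.toSum with hu
    have hcardu : u.card = c.card :=
      Finset.card_image_of_injective _ NullUnion.toSum_injective
    have hA : (CommutingGraph S).IsClique u.toLeft := by
      intro a ha b hb hab
      rw [Finset.mem_coe, Finset.mem_toLeft, hu, Finset.mem_image] at ha hb
      obtain ⟨x, hx, hxa⟩ := ha
      obtain ⟨y, hy, hyb⟩ := hb
      have hxy : x ≠ y := fun h => hab (by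
        apply Sum.inl_injective; rw [← hxa, ← hyb, h])
      have hadj := hc.isClique hx hy hxy
      have hcomm := congrArg (fun z : NullUnion S T => z.1.1) hadj.2
      obtain ⟨h1, _⟩ := NullUnion.toSum_eq_inl hxa
      obtain ⟨h2, _⟩ := NullUnion.toSum_eq_inl hyb
      refine ⟨hab, ?_⟩
      rw [← h1, ← h2]
      simpa [NullUnion.mul_val] using hcomm
    have hB : (CommutingGraph T).IsClique u.toRight := by
      intro a ha b hb hab
      rw [Finset.mem_coe, Finset.mem_toRight, hu, Finset.mem_image] at ha hb
      obtain ⟨x, hx, hxa⟩ := ha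
      obtain ⟨y, hy, hyb⟩ := hb
      have hxy : x ≠ y := fun h => hab (by
        apply Sum.inr_injective; rw [← hxa, ← hyb, h])
      have hadj := hc.isClique hx hy hxy
      have hcomm := congrArg (fun z : NullUnion S T => z.1.2) hadj.2
      obtain ⟨h1, _⟩ := NullUnion.toSum_eq_inr hxa
      obtain ⟨h2, _⟩ := NullUnion.toSum_eq_inr hyb
      refine ⟨hab, ?_⟩
      rw [← h1, ← h2]
      simpa [NullUnion.mul_val] using hcomm
    calc (CommutingGraph (NullUnion S T)).cliqueNum = c.card := hc.card_eq.symm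
      _ = u.toLeft.card + u.toRight.card := by
          rw [Finset.card_toLeft_add_card_toRight, hcardu]
      _ ≤ _ := Nat.add_le_add hA.card_le_cliqueNum hB.card_le_cliqueNum
  · -- ≥ : combine maximum cliques of S and T
    obtain ⟨a, ha⟩ := (CommutingGraph S).exists_isNClique_cliqueNum
    obtain ⟨b, hb⟩ := (CommutingGraph T).exists_isNClique_cliqueNum
    set c := a.image (NullUnion.eS (T := T)) ∪ b.image (NullUnion.eT (S := S)) with hcdef
    have hdisj : Disjoint (a.image (NullUnion.eS (T := T)))
        (b.image (NullUnion.eT (S := S))) := by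
      rw [Finset.disjoint_left]
      rintro x hx1 hx2
      rw [Finset.mem_image] at hx1 hx2
      obtain ⟨s, _, rfl⟩ := hx1
      obtain ⟨t, _, het⟩ := hx2
      have : s.1 = 0 := congrArg (fun z => z.1.1.1) het.symm
      exact s.2 (this ▸ NullUnion.zero_mem_center')
    have hclique : (CommutingGraph (NullUnion S T)).IsClique c := by
      intro x hx y hy hxy
      rw [Finset.mem_coe, hcdef, Finset.mem_union, Finset.mem_image,
        Finset.mem_image] at hx hy
      refine ⟨hxy, ?_⟩
      rcases hx with ⟨s, hs, rfl⟩ | ⟨t, ht, rfl⟩ <;>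
        rcases hy with ⟨s', hs', rfl⟩ | ⟨t', ht', rfl⟩
      · have hne : s ≠ s' := fun h => hxy (by rw [h])
        have := (ha.isClique hs hs' hne).2
        exact Subtype.ext (Prod.ext this rfl)
      · exact Subtype.ext (Prod.ext ((mul_zero _).trans (zero_mul _).symm)
          ((zero_mul _).trans (mul_zero _).symm))
      · exact Subtype.ext (Prod.ext ((zero_mul _).trans (mul_zero _).symm)
          ((mul_zero _).trans (zero_mul _).symm))
      · have hne : t ≠ t' := fun h => hxy (by rw [h])
        have := (hb.isClique ht ht' hne).2
        exact Subtype.ext (Prod.ext rfl this)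
    have hcard : c.card = a.card + b.card := by
      rw [hcdef, Finset.card_union_of_disjoint hdisj,
        Finset.card_image_of_injective _ NullUnion.eS_injective,
        Finset.card_image_of_injective _ NullUnion.eT_injective]
    calc (CommutingGraph S).cliqueNum + (CommutingGraph T).cliqueNum
        = c.card := by rw [hcard, ha.card_eq, hb.card_eq]
      _ ≤ _ := hclique.card_le_cliqueNum
end

section
/- Let S be a semigroup generated by d elements that has an ideal I not contained in the center Z(S) such that IS ⊆ Z(S) and SI ⊆ Z(S). If the commuting graph Γ(S) is connected, then its diameter is at most d + 2. -/
theorem diameter_le_of_ideal (S : Type*) [Semigroup S] (d : ℕ)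
    (gens : Finset S) (hcard : gens.card = d)
    (hgen : Subsemigroup.closure (gens : Set S) = ⊤)
    (I : Set S)
    (hideal : ∀ x ∈ I, ∀ s : S, s * x ∈ I ∧ x * s ∈ I)
    (hnc : ¬ I ⊆ Set.center S)
    (hcentral : ∀ x ∈ I, ∀ s : S, x * s ∈ Set.center S ∧ s * x ∈ Set.center S)
    (hconn : (CommutingGraph S).Connected) :
    ∀ u v, (CommutingGraph S).dist u v ≤ d + 2 := by
  classical
  set G := CommutingGraph S with hG
  intro u v
  -- the hub element
  obtain ⟨a, haI, haZ⟩ := Set.not_subset.mp hnc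
  -- ideal elements commute with every product
  have key : ∀ x ∈ I, ∀ s t : S, x * (s * t) = (s * t) * x := by
    intro x hx s t
    have h1 : ∀ g, g * (x * s) = (x * s) * g :=
      Semigroup.mem_center_iff.mp (hcentral x hx s).1
    have h2 : ∀ g, g * (t * x) = (t * x) * g :=
      Semigroup.mem_center_iff.mp (hcentral x hx t).2
    calc x * (s * t) = (x * s) * t := (mul_assoc x s t).symm
      _ = t * (x * s) := (h1 t).symm
      _ = (t * x) * s := (mul_assoc t x s).symm
      _ = s * (t * x) := (h2 s).symm
      _ = (s * t) * x := (mul_assoc s t x).symm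
  -- "good" vertices : products of two elements
  set Good : {x : S // x ∉ Set.center S} → Prop :=
    (fun z => ∃ s t : S, (z : S) = s * t) with hGood
  have hubComm : ∀ z : {x : S // x ∉ Set.center S}, Good z →
      a * (z : S) = (z : S) * a := by
    rintro z ⟨s, t, hst⟩
    rw [hst]
    exact key a haI s t
  set A : {x : S // x ∉ Set.center S} := ⟨a, haZ⟩ with hA
  -- any two good vertices are at distance ≤ 2
  have distGood : ∀ z z' : {x : S // x ∉ Set.center S}, Good z → Good z' →
      G.dist z z' ≤ 2 := by
    intro z z' hz hz'
    by_cases hzz : z = z'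
    · subst hzz; simp [SimpleGraph.dist_self]
    by_cases hza : z = A
    · have hadj : G.Adj z z' := by
        rw [hG]
        refine ⟨hzz, ?_⟩
        rw [hza]
        exact hubComm z' hz'
      calc G.dist z z' ≤ (SimpleGraph.Walk.cons hadj SimpleGraph.Walk.nil).length :=
            SimpleGraph.dist_le _
        _ ≤ 2 := by simp
    by_cases hz'a : z' = A
    · have hadj : G.Adj z z' := by
        rw [hG]
        refine ⟨hzz, ?_⟩
        rw [hz'a]
        exact (hubComm z hz).symm
      calc G.dist z z' ≤ (SimpleGraph.Walk.cons hadj SimpleGraph.Walk.nil).length :=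
            SimpleGraph.dist_le _
        _ ≤ 2 := by simp
    · have h1 : G.Adj z A := by rw [hG]; exact ⟨hza, (hubComm z hz).symm⟩
      have h2 : G.Adj A z' := by rw [hG]; exact ⟨fun h => hz'a h.symm, hubComm z' hz'⟩
      calc G.dist z z' ≤ (SimpleGraph.Walk.cons h1
              (SimpleGraph.Walk.cons h2 SimpleGraph.Walk.nil)).length :=
            SimpleGraph.dist_le _
        _ ≤ 2 := by simp
  -- non-good vertices are generators
  have hgens1 : ∀ s : S, s ∈ gens ∨ ∃ x y : S, s = x * y := by
    intro s
    have hs : s ∈ Subsemigroup.closure (gens : Set S) := by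
      rw [hgen]; trivial
    induction hs using Subsemigroup.closure_induction with
    | mem x hx => exact Or.inl hx
    | mul x y hx hy _ _ => exact Or.inr ⟨x, y, rfl⟩
  -- a shortest path from u to v
  obtain ⟨w, hw⟩ := hconn.exists_walk_length_eq_dist u v
  set p := w.bypass with hp'
  have hpath : p.IsPath := w.bypass_isPath
  have plen : p.length = G.dist u v :=
    le_antisymm (hw ▸ SimpleGraph.Walk.length_bypass_le w) (SimpleGraph.dist_le p)
  -- position of a vertex on the shortest path
  have hpos : ∀ z (hz : z ∈ p.support),
      G.dist u z ≤ p.length ∧ p.getVert (G.dist u z) = z := by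
    intro z hz
    have hsum : (p.takeUntil z hz).length + (p.dropUntil z hz).length = p.length := by
      have := congrArg SimpleGraph.Walk.length (p.take_spec hz)
      rwa [SimpleGraph.Walk.length_append] at this
    have h1 : G.dist u z ≤ (p.takeUntil z hz).length := SimpleGraph.dist_le _
    have h2 : G.dist z v ≤ (p.dropUntil z hz).length := SimpleGraph.dist_le _
    have htri : p.length ≤ G.dist u z + G.dist z v := plen ▸ hconn.dist_triangle
    have e1 : G.dist u z = (p.takeUntil z hz).length := by omega
    constructor
    · omega
    · have hg := congrArg (fun q : G.Walk u v => q.getVert (p.takeUntil z hz).length)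
        (p.take_spec hz)
      simp only [SimpleGraph.Walk.getVert_append, lt_irrefl, if_false, Nat.sub_self,
        SimpleGraph.Walk.getVert_zero] at hg
      rw [e1]
      exact hg.symm
  set F := p.support.toFinset with hF
  have hFcard : F.card = p.length + 1 := by
    rw [hF, List.toFinset_card_of_nodup hpath.support_nodup,
      SimpleGraph.Walk.length_support]
  set B := F.filter Good with hB
  set Bad := F.filter (fun z => ¬ Good z) with hBad
  have hsplit : B.card + Bad.card = F.card :=
    Finset.card_filter_add_card_filter_not (p := Good)
  -- bad vertices inject into the generators
  have hBadle : Bad.card ≤ d := by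
    rw [← hcard]
    refine Finset.card_le_card_of_injOn (fun z => (z : S)) ?_ ?_
    · intro z hz
      rw [hBad, Finset.mem_coe, Finset.mem_filter] at hz
      rcases hgens1 (z : S) with h | h
      · exact h
      · exact absurd h hz.2
    · intro z _ z' _ h
      exact Subtype.ext h
  -- good vertices on the path: at most 3
  have hBle : B.card ≤ 3 := by
    rcases B.eq_empty_or_nonempty with hBe | hBne
    · simp [hBe]
    obtain ⟨z₀, hz₀, hmin⟩ := Finset.exists_min_image B (fun z => G.dist u z) hBne
    have hz₀g : Good z₀ := (Finset.mem_filter.mp hz₀).2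
    have h3 : (3 : ℕ) = (Finset.range 3).card := by simp
    rw [h3]
    refine Finset.card_le_card_of_injOn (fun z => G.dist u z - G.dist u z₀) ?_ ?_
    · intro z hz
      have hzg : Good z := (Finset.mem_filter.mp hz).2
      have h2 : G.dist z₀ z ≤ 2 := distGood _ _ hz₀g hzg
      have htri : G.dist u z ≤ G.dist u z₀ + G.dist z₀ z := hconn.dist_triangle
      simp only [Finset.mem_coe, Finset.mem_range]
      omega
    · intro z hz z' hz' h
      have hzB : z ∈ B := hz
      have hzB' : z' ∈ B := hz'
      have hm : G.dist u z₀ ≤ G.dist u z := hmin z hzB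
      have hm' : G.dist u z₀ ≤ G.dist u z' := hmin z' hzB'
      have h' : G.dist u z - G.dist u z₀ = G.dist u z' - G.dist u z₀ := h
      have heq : G.dist u z = G.dist u z' := by omega
      have hzs : z ∈ p.support := by
        have := (Finset.mem_filter.mp hzB).1; rwa [hF, List.mem_toFinset] at this
      have hzs' : z' ∈ p.support := by
        have := (Finset.mem_filter.mp hzB').1; rwa [hF, List.mem_toFinset] at this
      have gv := (hpos z hzs).2
      have gv' := (hpos z' hzs').2
      rw [← gv, ← gv', heq]
  omega
end

section
/- Let S be a finite non-commutative nilpotent semigroup with zero, of nilpotency degree c, generated by d elements. If the commuting graph Γ(S) is connected, then its diameter is at most d + 2. -/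
/-- `sPow S m` is the set `S^m = {a₁a₂⋯a_m | aᵢ ∈ S}` (with `S^0 = S^1 = S`). -/
def sPow (S : Type*) [Mul S] : ℕ → Set S
  | 0 => Set.univ
  | 1 => Set.univ
  | n + 2 => Set.image2 (· * ·) (sPow S (n + 1)) Set.univ

private lemma sPow_mul_right {S : Type*} [Semigroup S] :
    ∀ (n : ℕ), 1 ≤ n → ∀ (x s : S), x ∈ sPow S n → x * s ∈ sPow S (n + 1)
  | (n + 1), _, x, s, hx => ⟨x, hx, s, trivial, rfl⟩

private lemma sPow_mul_left {S : Type*} [Semigroup S] :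
    ∀ (n : ℕ), 1 ≤ n → ∀ (x s : S), x ∈ sPow S n → s * x ∈ sPow S (n + 1)
  | 1, _, x, s, _ => ⟨s, trivial, x, trivial, rfl⟩
  | (n + 2), _, x, s, hx => by
      obtain ⟨y, hy, t, -, rfl⟩ := hx
      have hsy : s * y ∈ sPow S (n + 2) := sPow_mul_left (n + 1) (by omega) y s hy
      exact ⟨s * y, hsy, t, trivial, mul_assoc s y t⟩

private lemma walk_get_dist {V : Type*} {G : SimpleGraph V} {u v : V} (p : G.Walk u v) :
    ∀ (i : ℕ) (hi : i < p.support.length),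
      (∃ q : G.Walk u (p.support.get ⟨i, hi⟩), q.length = i) ∧
      (∃ r : G.Walk (p.support.get ⟨i, hi⟩) v, r.length = p.length - i) := by
  induction p with
  | nil =>
    intro i hi
    simp only [SimpleGraph.Walk.support_nil, List.length_singleton] at hi
    match i, hi with
    | 0, _ => exact ⟨⟨SimpleGraph.Walk.nil, rfl⟩, ⟨SimpleGraph.Walk.nil, rfl⟩⟩
  | cons h p ih =>
    intro i hi
    match i with
    | 0 =>
      refine ⟨⟨SimpleGraph.Walk.nil, rfl⟩, ⟨SimpleGraph.Walk.cons h p, ?_⟩⟩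
      simp
    | (j + 1) =>
      have hj : j < p.support.length := by
        simp only [SimpleGraph.Walk.support_cons, List.length_cons] at hi
        omega
      obtain ⟨⟨q, hq⟩, ⟨r, hr⟩⟩ := ih j hj
      refine ⟨⟨SimpleGraph.Walk.cons h q, ?_⟩, ⟨r, ?_⟩⟩
      · simp [hq]
      · show r.length = (SimpleGraph.Walk.cons h p).length - (j + 1)
        rw [SimpleGraph.Walk.length_cons, hr]
        omega

theorem diameter_le_of_nilpotent (S : Type*) [SemigroupWithZero S] [Finite S]
    (hnoncomm : ∃ a b : S, a * b ≠ b * a)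
    (c : ℕ) (hnil : sPow S c = {0})
    (d : ℕ) (gens : Finset S) (hcard : gens.card = d)
    (hgen : Subsemigroup.closure (gens : Set S) = ⊤)
    (hconn : (CommutingGraph S).Connected) :
    ∀ u v, (CommutingGraph S).dist u v ≤ d + 2 := by
  classical
  set G := CommutingGraph S with hG
  -- existence of some n with S^n ⊆ Z(S)
  have hex : ∃ n, sPow S n ⊆ Set.center S := by
    refine ⟨c, ?_⟩
    rw [hnil]
    intro x hx
    rw [Set.mem_singleton_iff] at hx
    subst hx
    exact Semigroup.mem_center_iff.mpr fun g => by rw [mul_zero, zero_mul]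
  obtain ⟨m, hmle, hmmin⟩ : ∃ m, (sPow S m ⊆ Set.center S) ∧
      ∀ k < m, ¬ (sPow S k ⊆ Set.center S) :=
    ⟨Nat.find hex, Nat.find_spec hex, fun k hk => Nat.find_min hex hk⟩
  have hm2 : 2 ≤ m := by
    by_contra hlt
    push_neg at hlt
    obtain ⟨a, b, hab⟩ := hnoncomm
    have huniv : sPow S m = Set.univ := by interval_cases m <;> rfl
    have ha : a ∈ Set.center S := hmle (huniv ▸ Set.mem_univ a)
    exact hab ((Semigroup.mem_center_iff.mp ha b).symm)
  obtain ⟨h₀, hh₀, hh₀c⟩ := Set.not_subset.mp (hmmin (m - 1) (by omega))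
  -- key lemma: every product of two elements commutes with h₀
  have keyA : ∀ x : S, x ∈ sPow S 2 → x * h₀ = h₀ * x := by
    intro x hx
    obtain ⟨y, -, z, -, rfl⟩ := hx
    have e : m - 1 + 1 = m := by omega
    have h1 : h₀ * y ∈ Set.center S :=
      hmle (e ▸ sPow_mul_right (m - 1) (by omega) h₀ y hh₀)
    have h2 : z * h₀ ∈ Set.center S :=
      hmle (e ▸ sPow_mul_left (m - 1) (by omega) h₀ z hh₀)
    show y * z * h₀ = h₀ * (y * z)
    calc y * z * h₀ = y * (z * h₀) := mul_assoc _ _ _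
      _ = (z * h₀) * y := Semigroup.mem_center_iff.mp h2 y
      _ = z * (h₀ * y) := mul_assoc _ _ _
      _ = (h₀ * y) * z := Semigroup.mem_center_iff.mp h1 z
      _ = h₀ * (y * z) := mul_assoc _ _ _
  -- every element is a generator or a product of two elements
  have hgenor : ∀ x : S, x ∈ (gens : Set S) ∨ x ∈ sPow S 2 := by
    intro x
    have hx : x ∈ Subsemigroup.closure (gens : Set S) := by
      rw [hgen]; exact Subsemigroup.mem_top x
    refine Subsemigroup.closure_induction (p := fun x _ => x ∈ (gens : Set S) ∨ x ∈ sPow S 2)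
      (fun x h => Or.inl h) (fun x y _ _ _ _ => Or.inr ⟨x, trivial, y, trivial, rfl⟩) hx
  -- vertices which are products are pairwise at distance at most 2
  set w : {x : S // x ∉ Set.center S} := ⟨h₀, hh₀c⟩ with hw
  have hadj : ∀ x : {x : S // x ∉ Set.center S},
      (x : S) ∈ sPow S 2 → x ≠ w → G.Adj x w :=
    fun x hx hne => And.intro hne (keyA (x : S) hx)
  have hdist2 : ∀ x y : {x : S // x ∉ Set.center S},
      (x : S) ∈ sPow S 2 → (y : S) ∈ sPow S 2 → G.dist x y ≤ 2 := by
    intro x y hx hy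
    by_cases hxy : x = y
    · subst hxy; simp [SimpleGraph.dist_self]
    by_cases hyw : y = w
    · have hxw : x ≠ w := fun e => hxy (e.trans hyw.symm)
      have hA : G.Adj x y := by rw [hyw]; exact hadj x hx hxw
      have h1 := SimpleGraph.dist_eq_one_iff_adj.mpr hA
      omega
    by_cases hxw : x = w
    · have hA : G.Adj x y := by rw [hxw]; exact (hadj y hy hyw).symm
      have h1 := SimpleGraph.dist_eq_one_iff_adj.mpr hA
      omega
    · have hxw' : G.Adj x w := hadj x hx hxw
      have hwy : G.Adj w y := (hadj y hy hyw).symm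
      have : G.dist x y ≤ (SimpleGraph.Walk.cons hxw'
          (SimpleGraph.Walk.cons hwy SimpleGraph.Walk.nil)).length :=
        SimpleGraph.dist_le _
      simpa using this
  intro u v
  -- take a geodesic path
  obtain ⟨p₀, hp₀⟩ := hconn.exists_walk_length_eq_dist u v
  set p := p₀.bypass with hp
  have hpath : p.IsPath := p₀.bypass_isPath
  have hplen : p.length = G.dist u v :=
    le_antisymm (hp₀ ▸ p₀.length_bypass_le) (SimpleGraph.dist_le p)
  set xs := p.support with hxs
  have hnod : xs.Nodup := hpath.support_nodup
  have hlen : xs.length = G.dist u v + 1 := by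
    rw [hxs, SimpleGraph.Walk.length_support, hplen]
  -- closeness of product-indices
  have hclose : ∀ i j : Fin xs.length,
      ((xs.get i : S) ∈ sPow S 2) → ((xs.get j : S) ∈ sPow S 2) →
      (i : ℕ) ≤ (j : ℕ) → (j : ℕ) ≤ (i : ℕ) + 2 := by
    intro i j hi hj hij
    obtain ⟨⟨q, hq⟩, -⟩ := walk_get_dist p i i.isLt
    obtain ⟨-, ⟨r, hr⟩⟩ := walk_get_dist p j j.isLt
    have h1 : G.dist u (xs.get i) ≤ (i : ℕ) :=
      le_trans (SimpleGraph.dist_le q) (le_of_eq hq)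
    have h2 : G.dist (xs.get j) v ≤ p.length - (j : ℕ) :=
      le_trans (SimpleGraph.dist_le r) (le_of_eq hr)
    have h3 : G.dist (xs.get i) (xs.get j) ≤ 2 := hdist2 _ _ hi hj
    have t1 : G.dist u v ≤ G.dist u (xs.get i) + G.dist (xs.get i) v :=
      hconn.dist_triangle
    have t2 : G.dist (xs.get i) v ≤ G.dist (xs.get i) (xs.get j) + G.dist (xs.get j) v :=
      hconn.dist_triangle
    have hjlt : (j : ℕ) < xs.length := j.isLt
    omega
  -- counting
  set T : Finset (Fin xs.length) :=
    Finset.univ.filter (fun i => ((xs.get i : S) ∈ sPow S 2)) with hT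
  have hTcard : T.card ≤ 3 := by
    rcases T.eq_empty_or_nonempty with h | h
    · simp [h]
    · set i₀ := T.min' h with hi₀def
      have hi₀ : i₀ ∈ T := T.min'_mem h
      have hPi₀ : (xs.get i₀ : S) ∈ sPow S 2 := by
        simpa [hT] using hi₀
      have hmem : ∀ j ∈ T, (j : ℕ) ∈ Finset.Icc (i₀ : ℕ) ((i₀ : ℕ) + 2) := by
        intro j hj
        have h1 : i₀ ≤ j := T.min'_le j hj
        have hPj : (xs.get j : S) ∈ sPow S 2 := by simpa [hT] using hj
        have h2 := hclose i₀ j hPi₀ hPj h1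
        exact Finset.mem_Icc.mpr ⟨h1, h2⟩
      calc T.card ≤ (Finset.Icc (i₀ : ℕ) ((i₀ : ℕ) + 2)).card :=
            Finset.card_le_card_of_injOn (fun j => (j : ℕ)) hmem
              (Fin.val_injective.injOn)
        _ = 3 := by rw [Nat.card_Icc]; omega
  have hTc : Tᶜ.card ≤ d := by
    rw [← hcard]
    apply Finset.card_le_card_of_injOn (fun i => ((xs.get i : S)))
    · intro i hi
      have hnot : ¬ ((xs.get i : S) ∈ sPow S 2) := by
        simp only [hT, Finset.mem_compl, Finset.mem_filter, Finset.mem_univ,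
          true_and] at hi
        simpa using hi
      rcases hgenor (xs.get i : S) with hg | hg
      · exact hg
      · exact absurd hg hnot
    · intro a _ b _ hab
      have h1 : xs.get a = xs.get b := Subtype.ext hab
      exact List.nodup_iff_injective_get.mp hnod h1
  have htot : xs.length ≤ 3 + d := by
    have hcc := Finset.card_add_card_compl T
    rw [Fintype.card_fin] at hcc
    omega
  omega
end
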